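/- arXiv:1005.3186 — 3 statements merged into one kernel-verified Lean document; each statement's English description precedes it below -/
import Mathlib

section
/- Let X be a Banach space and J ⊆ ℤ an interval. If a family of evolution operators T(n,m), n ≥ m in J, admits an exponential dichotomy on J with exponent β, bound M and projections P(n), then the adjoint family T*(m,n) := (T(n,m))* on the dual space X* admits a reverse exponential dichotomy on J with the same exponent β and bound M and with the projections P*(n) = (P(n))*. -/
open Set

variable {X : Type*} [NormedAddCommGroup X] [NormedSpace ℝ X] [CompleteSpace X]

/-- The evolution operators `T(n,m) = T_{n-1} ∘ ⋯ ∘ T_m` (for `n ≥ m`) associated with a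
family of one-step operators `T k = T(k+1,k)`. -/
noncomputable def evolOp (T : ℤ → X →L[ℝ] X) (n m : ℤ) : X →L[ℝ] X :=
  (List.range (n - m).toNat).foldl (fun A k => (T (m + k)).comp A) (ContinuousLinearMap.id ℝ X)

/-- A (discrete) exponential dichotomy on an interval `J ⊆ ℤ` with exponent `β`, bound `M`
and projections `P n`, for the evolution family generated by the one-step operators `T n`.
`P n` projects onto the unstable part: `(iii)` forward decay on the ranges of `I - P n`;
`(iv)` backward decay (`T(n,m)` is invertible from `R(P m)` onto `R(P n)` with inverse of
norm at most `M e^{-β(n-m)}`). -/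
structure ExpDichotomyOn (T : ℤ → X →L[ℝ] X) (J : Set ℤ) (β M : ℝ)
    (P : ℤ → X →L[ℝ] X) : Prop where
  beta_pos : 0 < β
  bound_pos : 0 < M
  isProj : ∀ n ∈ J, (P n).comp (P n) = P n
  commute : ∀ m ∈ J, ∀ n ∈ J, m ≤ n →
    (P n).comp (evolOp T n m) = (evolOp T n m).comp (P m)
  isoRange : ∀ m ∈ J, ∀ n ∈ J, m ≤ n →
    ⇑(evolOp T n m) '' Set.range (P m) = Set.range (P n)
  stable : ∀ m ∈ J, ∀ n ∈ J, m ≤ n → ∀ x : X,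
    ‖evolOp T n m (x - P m x)‖ ≤ M * Real.exp (-β * ((n - m : ℤ) : ℝ)) * ‖x‖
  unstable : ∀ m ∈ J, ∀ n ∈ J, m ≤ n → ∀ x w : X, w ∈ Set.range (P m) →
    evolOp T n m w = P n x → ‖w‖ ≤ M * Real.exp (-β * ((n - m : ℤ) : ℝ)) * ‖x‖

/-- The dichotomy with projections `P` has finite rank `k` on `J`. -/
def DichotomyRankOn (P : ℤ → X →L[ℝ] X) (J : Set ℤ) (k : ℕ) : Prop :=
  ∀ n ∈ J, FiniteDimensional ℝ (LinearMap.range (P n : X →ₗ[ℝ] X)) ∧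
    Module.finrank ℝ (LinearMap.range (P n : X →ₗ[ℝ] X)) = k

/-- The Banach-space adjoint (dual map) of a continuous linear operator. -/
noncomputable def dualOp (f : X →L[ℝ] X) :
    StrongDual ℝ X →L[ℝ] StrongDual ℝ X :=
  (ContinuousLinearMap.compL ℝ X X ℝ).flip f

/-- The backward evolution operators `S(m,n) = S_m ∘ S_{m+1} ∘ ⋯ ∘ S_{n-1}` (for `m ≤ n`)
associated with a family of one-step operators; for `S k = (T k)*` this gives the adjoint
evolution family `T*(m,n) = (T(n,m))*`. -/
noncomputable def revEvolOp {Y : Type*} [NormedAddCommGroup Y] [NormedSpace ℝ Y]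
    (S : ℤ → Y →L[ℝ] Y) (m n : ℤ) : Y →L[ℝ] Y :=
  (List.range (n - m).toNat).foldl (fun A k => A.comp (S (m + k))) (ContinuousLinearMap.id ℝ Y)

/-- A reverse exponential dichotomy on an interval `J ⊆ ℤ` with exponent `β`, bound `M`
and projections `Q n`, for the backward evolution family `S(m,n)` (for `m ≤ n` in `J`):
(i) `S(m,n) Q(n) = Q(m) S(m,n)`; (ii) `S(m,n)` restricted to `R(Q n)` is an isomorphism
onto `R(Q m)`; (iii) `‖S(m,n)(I - Q(n))‖ ≤ M e^{-β(n-m)}`; (iv) the inverse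
`S(n,m) : R(Q m) → R(Q n)` satisfies `‖S(n,m) Q(m)‖ ≤ M e^{-β(n-m)}`. -/
structure RevExpDichotomyOn {Y : Type*} [NormedAddCommGroup Y] [NormedSpace ℝ Y]
    (S : ℤ → Y →L[ℝ] Y) (J : Set ℤ) (β M : ℝ) (Q : ℤ → Y →L[ℝ] Y) : Prop where
  beta_pos : 0 < β
  bound_pos : 0 < M
  isProj : ∀ n ∈ J, (Q n).comp (Q n) = Q n
  commute : ∀ m ∈ J, ∀ n ∈ J, m ≤ n →
    (Q m).comp (revEvolOp S m n) = (revEvolOp S m n).comp (Q n)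
  isoRange : ∀ m ∈ J, ∀ n ∈ J, m ≤ n →
    ⇑(revEvolOp S m n) '' Set.range (Q n) = Set.range (Q m)
  stable : ∀ m ∈ J, ∀ n ∈ J, m ≤ n → ∀ y : Y,
    ‖revEvolOp S m n (y - Q n y)‖ ≤ M * Real.exp (-β * ((n - m : ℤ) : ℝ)) * ‖y‖
  unstable : ∀ m ∈ J, ∀ n ∈ J, m ≤ n → ∀ y w : Y, w ∈ Set.range (Q n) →
    revEvolOp S m n w = Q m y → ‖w‖ ≤ M * Real.exp (-β * ((n - m : ℤ) : ℝ)) * ‖y‖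

lemma dualOp_apply (f : X →L[ℝ] X) (φ : StrongDual ℝ X) (x : X) :
    dualOp f φ x = φ (f x) := rfl

lemma dualOp_comp (f g : X →L[ℝ] X) :
    dualOp (f.comp g) = (dualOp g).comp (dualOp f) := by
  ext φ x; rfl

lemma dualOp_id :
    dualOp (ContinuousLinearMap.id ℝ X) =
      ContinuousLinearMap.id ℝ (StrongDual ℝ X) := by
  ext φ x; rfl

lemma foldl_dual (T : ℤ → X →L[ℝ] X) (L : List ℤ) :
    L.foldl (fun A k => A.comp (dualOp (T k))) (ContinuousLinearMap.id ℝ (StrongDual ℝ X))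
      = dualOp (L.foldl (fun A k => (T k).comp A) (ContinuousLinearMap.id ℝ X)) := by
  induction L using List.reverseRecOn with
  | nil => simp [dualOp_id]
  | append_singleton L a ih =>
      rw [List.foldl_append, List.foldl_append]
      simp only [List.foldl_cons, List.foldl_nil]
      rw [ih, dualOp_comp]

lemma revEvolOp_dual (T : ℤ → X →L[ℝ] X) (m n : ℤ) :
    revEvolOp (fun k => dualOp (T k)) m n = dualOp (evolOp T n m) := by
  unfold revEvolOp evolOp
  exact foldl_dual (fun k => T (m + k)) _

/-- **The adjoint family of an exponential dichotomy admits a reverse exponential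
dichotomy** on the same interval, with the same exponent and bound, and with the adjoint
projections `P*(n) = (P n)*`. -/
theorem adjoint_reverse_exponential_dichotomy
    (T : ℤ → X →L[ℝ] X) (J : Set ℤ) (hJ : J.OrdConnected)
    (β M : ℝ) (P : ℤ → X →L[ℝ] X)
    (h : ExpDichotomyOn T J β M P) :
    RevExpDichotomyOn (fun n => dualOp (T n)) J β M (fun n => dualOp (P n)) := by
  -- pointwise projection identity
  have hP : ∀ n ∈ J, ∀ x : X, P n (P n x) = P n x := by
    intro n hn x
    have := congrArg (fun f : X →L[ℝ] X => f x) (h.isProj n hn)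
    simpa using this
  -- pointwise commutation
  have hC : ∀ m ∈ J, ∀ n ∈ J, m ≤ n → ∀ x : X,
      P n (evolOp T n m x) = evolOp T n m (P m x) := by
    intro m hm n hn hmn x
    have := congrArg (fun f : X →L[ℝ] X => f x) (h.commute m hm n hn hmn)
    simpa using this
  -- existence of preimages in the range of `P m`
  have hsel : ∀ m ∈ J, ∀ n ∈ J, m ≤ n → ∀ x : X,
      ∃ w : X, P m w = w ∧ evolOp T n m w = P n x := by
    intro m hm n hn hmn x
    have hx : P n x ∈ Set.range (P n) := ⟨x, rfl⟩
    rw [← h.isoRange m hm n hn hmn] at hx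
    obtain ⟨w, ⟨u, hu⟩, hw⟩ := hx
    exact ⟨w, by rw [← hu]; exact hP m hm u, hw⟩
  -- injectivity of `evolOp T n m` on the range of `P m`
  have hinj : ∀ m ∈ J, ∀ n ∈ J, m ≤ n → ∀ w w' : X, P m w = w → P m w' = w' →
      evolOp T n m w = evolOp T n m w' → w = w' := by
    intro m hm n hn hmn w w' hw hw' hww'
    have hmem : w - w' ∈ Set.range (P m) := ⟨w - w', by rw [map_sub, hw, hw']⟩
    have h0 : evolOp T n m (w - w') = P n 0 := by
      rw [map_sub, hww', sub_self, map_zero]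
    have := h.unstable m hm n hn hmn 0 (w - w') hmem h0
    rw [norm_zero, mul_zero] at this
    have : ‖w - w'‖ = 0 := le_antisymm this (norm_nonneg _)
    have := norm_sub_eq_zero_iff.mp this
    exact this
  refine ⟨h.beta_pos, h.bound_pos, ?_, ?_, ?_, ?_, ?_⟩
  · intro n hn
    show (dualOp (P n)).comp (dualOp (P n)) = dualOp (P n)
    rw [← dualOp_comp, h.isProj n hn]
  · intro m hm n hn hmn
    show (dualOp (P m)).comp (revEvolOp (fun k => dualOp (T k)) m n)
      = (revEvolOp (fun k => dualOp (T k)) m n).comp (dualOp (P n))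
    rw [revEvolOp_dual, ← dualOp_comp, ← dualOp_comp, h.commute m hm n hn hmn]
  · intro m hm n hn hmn
    show ⇑(revEvolOp (fun k => dualOp (T k)) m n) '' Set.range ⇑(dualOp (P n))
      = Set.range ⇑(dualOp (P m))
    rw [revEvolOp_dual]
    set E := evolOp T n m with hE
    ext φ
    constructor
    · rintro ⟨χ, ⟨ψ, rfl⟩, rfl⟩
      refine ⟨dualOp E (dualOp (P n) ψ), ?_⟩
      ext x
      simp only [dualOp_apply]
      rw [hC m hm n hn hmn, hP m hm, ← hC m hm n hn hmn]
    · rintro ⟨ψ, rfl⟩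
      -- construct the preimage functional
      choose sel hsel1 hsel2 using hsel m hm n hn hmn
      set C := M * Real.exp (-β * ((n - m : ℤ) : ℝ)) with hCdef
      have selbound : ∀ x : X, ‖sel x‖ ≤ C * ‖x‖ := fun x =>
        h.unstable m hm n hn hmn x (sel x) ⟨sel x, hsel1 x⟩ (hsel2 x)
      have sel_add : ∀ x y : X, sel (x + y) = sel x + sel y := by
        intro x y
        refine hinj m hm n hn hmn _ _ (hsel1 _) ?_ ?_
        · rw [map_add, hsel1, hsel1]
        · rw [map_add, hsel2, hsel2, hsel2, map_add]
      have sel_smul : ∀ (r : ℝ) (x : X), sel (r • x) = r • sel x := by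
        intro r x
        refine hinj m hm n hn hmn _ _ (hsel1 _) ?_ ?_
        · rw [map_smul, hsel1]
        · rw [map_smul, hsel2, hsel2, map_smul]
      let ψl : X →ₗ[ℝ] ℝ :=
        { toFun := fun x => ψ (sel x)
          map_add' := fun x y => by
            show ψ (sel (x + y)) = ψ (sel x) + ψ (sel y)
            rw [sel_add, map_add]
          map_smul' := fun r x => by
            show ψ (sel (r • x)) = r • ψ (sel x)
            rw [sel_smul, map_smul] }
      have ψbound : ∀ x : X, ‖ψl x‖ ≤ ‖ψ‖ * C * ‖x‖ := by
        intro x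
        calc ‖ψ (sel x)‖ ≤ ‖ψ‖ * ‖sel x‖ := ψ.le_opNorm _
          _ ≤ ‖ψ‖ * (C * ‖x‖) :=
            mul_le_mul_of_nonneg_left (selbound x) (norm_nonneg _)
          _ = ‖ψ‖ * C * ‖x‖ := by ring
      let ψc : StrongDual ℝ X := ψl.mkContinuous (‖ψ‖ * C) ψbound
      have hψc : ∀ x : X, ψc x = ψ (sel x) := fun _ => rfl
      refine ⟨ψc, ⟨ψc, ?_⟩, ?_⟩
      · ext x
        rw [dualOp_apply, hψc, hψc]
        congr 1
        refine hinj m hm n hn hmn _ _ (hsel1 _) (hsel1 _) ?_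
        rw [hsel2, hsel2, hP n hn]
      · ext x
        rw [dualOp_apply, hψc, dualOp_apply]
        congr 1
        refine hinj m hm n hn hmn _ _ (hsel1 _) (hP m hm x) ?_
        rw [hsel2, hC m hm n hn hmn]
  · intro m hm n hn hmn y
    rw [revEvolOp_dual]
    set C := M * Real.exp (-β * ((n - m : ℤ) : ℝ)) with hCdef
    have hC0 : 0 ≤ C := by rw [hCdef]; exact mul_nonneg h.bound_pos.le (Real.exp_pos _).le
    refine ContinuousLinearMap.opNorm_le_bound _ (mul_nonneg hC0 (norm_nonneg _)) ?_
    intro x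
    have key : (dualOp (evolOp T n m) (y - dualOp (P n) y)) x
        = y (evolOp T n m (x - P m x)) := by
      simp only [ContinuousLinearMap.sub_apply, dualOp_apply, map_sub]
      rw [hC m hm n hn hmn]
    rw [key]
    calc ‖y (evolOp T n m (x - P m x))‖
        ≤ ‖y‖ * ‖evolOp T n m (x - P m x)‖ := y.le_opNorm _
      _ ≤ ‖y‖ * (C * ‖x‖) :=
        mul_le_mul_of_nonneg_left (h.stable m hm n hn hmn x) (norm_nonneg _)
      _ = C * ‖y‖ * ‖x‖ := by ring
  · intro m hm n hn hmn y ψ hψmem hψeq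
    rw [revEvolOp_dual] at hψeq
    set C := M * Real.exp (-β * ((n - m : ℤ) : ℝ)) with hCdef
    obtain ⟨χ, hχ⟩ := hψmem
    have hψfix : ∀ x : X, ψ (P n x) = ψ x := by
      intro x
      rw [← hχ]
      simp only [dualOp_apply]
      rw [hP n hn]
    have hψE : ∀ x : X, ψ (evolOp T n m x) = y (P m x) := by
      intro x
      have := congrArg (fun f : StrongDual ℝ X => f x) hψeq
      simpa [dualOp_apply] using this
    have hC0 : 0 ≤ C := by rw [hCdef]; exact mul_nonneg h.bound_pos.le (Real.exp_pos _).le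
    refine ContinuousLinearMap.opNorm_le_bound _ (mul_nonneg hC0 (norm_nonneg _)) ?_
    intro x
    obtain ⟨w, hw1, hw2⟩ := hsel m hm n hn hmn x
    have hwnorm : ‖w‖ ≤ C * ‖x‖ :=
      h.unstable m hm n hn hmn x w ⟨w, hw1⟩ hw2
    have : ψ x = y w := by
      rw [← hψfix x, ← hw2, hψE, hw1]
    rw [this]
    calc ‖y w‖ ≤ ‖y‖ * ‖w‖ := y.le_opNorm _
      _ ≤ ‖y‖ * (C * ‖x‖) :=
        mul_le_mul_of_nonneg_left hwnorm (norm_nonneg _)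
      _ = C * ‖y‖ * ‖x‖ := by ring
end

section
/- Let T(n+1,n), n ∈ ℤ, be a family of evolution operators on a Banach space X. The family admits an exponential dichotomy on ℤ if and only if its restrictions to ℤ⁺ and to ℤ⁻ both admit exponential dichotomies and X = S₀ ⊕ U₀, where U₀ = {x₀ ∈ X : there exists a bounded sequence (x_n)_{n ≤ 0} with x_{n+1} = T(n+1,n)x_n for n < 0} and S₀ = {x₀ ∈ X : there exists a bounded sequence (x_n)_{n ≥ 0} with x_{n+1} = T(n+1,n)x_n for n ≥ 0}. When the dichotomies on ℤ⁺ and ℤ⁻ have finite rank, the condition X = S₀ ⊕ U₀ implies the two ranks are equal. -/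
open Set

variable {X : Type*} [NormedAddCommGroup X] [NormedSpace ℝ X] [CompleteSpace X]

/-- `U₀`: the set of initial values of bounded backward solutions. -/
def unstableSet (T : ℤ → X →L[ℝ] X) : Set X :=
  {x₀ | ∃ xs : ℤ → X, (∃ C : ℝ, ∀ n ≤ (0:ℤ), ‖xs n‖ ≤ C) ∧ xs 0 = x₀ ∧
    ∀ n < (0:ℤ), xs (n + 1) = T n (xs n)}

/-- `S₀`: the set of initial values of bounded forward solutions. -/
def stableSet (T : ℤ → X →L[ℝ] X) : Set X :=
  {x₀ | ∃ xs : ℤ → X, (∃ C : ℝ, ∀ n ≥ (0:ℤ), ‖xs n‖ ≤ C) ∧ xs 0 = x₀ ∧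
    ∀ n ≥ (0:ℤ), xs (n + 1) = T n (xs n)}

/-- The direct sum decomposition `X = S₀ ⊕ U₀`: every `x` is uniquely the sum of an
element of `S₀` and an element of `U₀`. -/
def DirectSumDecomp (T : ℤ → X →L[ℝ] X) : Prop :=
  ∀ x : X, ∃! su : X × X, su.1 ∈ stableSet T ∧ su.2 ∈ unstableSet T ∧ x = su.1 + su.2


set_option linter.unusedSectionVars false

lemma evolOp_of_le (T : ℤ → X →L[ℝ] X) {n m : ℤ} (h : n ≤ m) :
    evolOp T n m = ContinuousLinearMap.id ℝ X := by
  unfold evolOp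
  rw [Int.toNat_of_nonpos (by omega)]
  rfl

lemma evolOp_self (T : ℤ → X →L[ℝ] X) (m : ℤ) : evolOp T m m = ContinuousLinearMap.id ℝ X :=
  evolOp_of_le T le_rfl

lemma evolOp_self_apply (T : ℤ → X →L[ℝ] X) (m : ℤ) (x : X) : evolOp T m m x = x := by
  rw [evolOp_self]; rfl

lemma evolOp_succ (T : ℤ → X →L[ℝ] X) {n m : ℤ} (h : m ≤ n) :
    evolOp T (n + 1) m = (T n).comp (evolOp T n m) := by
  unfold evolOp
  have h1 : (n + 1 - m).toNat = (n - m).toNat + 1 := by omega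
  rw [h1, List.range_succ]
  simp only [List.pure_def, List.bind_eq_flatMap, List.flatMap_append, List.flatMap_cons,
    Int.ofNat_toNat, List.flatMap_nil, List.singleton_append, List.foldl_append, List.foldl_cons,
    List.foldl_nil]
  congr 2
  omega

lemma evolOp_comp (T : ℤ → X →L[ℝ] X) {m k : ℤ} (h1 : m ≤ k) :
    ∀ n, k ≤ n → (evolOp T n k).comp (evolOp T k m) = evolOp T n m := by
  refine Int.le_induction ?_ ?_
  · rw [evolOp_self]; ext x; simp
  · intro n hkn ih
    rw [evolOp_succ T hkn, evolOp_succ T (h1.trans hkn), ContinuousLinearMap.comp_assoc, ih]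

lemma evolOp_comp_apply (T : ℤ → X →L[ℝ] X) {m k n : ℤ} (h1 : m ≤ k) (h2 : k ≤ n) (x : X) :
    evolOp T n k (evolOp T k m x) = evolOp T n m x := by
  rw [← evolOp_comp T h1 n h2]; rfl

lemma evolOp_succ_apply (T : ℤ → X →L[ℝ] X) {n m : ℤ} (h : m ≤ n) (x : X) :
    evolOp T (n + 1) m x = T n (evolOp T n m x) := by rw [evolOp_succ T h]; rfl

namespace ExpDichotomyOn

variable {T : ℤ → X →L[ℝ] X} {J : Set ℤ} {β M : ℝ} {P : ℤ → X →L[ℝ] X}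

lemma mono (hd : ExpDichotomyOn T J β M P) {J' : Set ℤ} (hJ : J' ⊆ J) :
    ExpDichotomyOn T J' β M P where
  beta_pos := hd.beta_pos
  bound_pos := hd.bound_pos
  isProj n hn := hd.isProj n (hJ hn)
  commute m hm n hn := hd.commute m (hJ hm) n (hJ hn)
  isoRange m hm n hn := hd.isoRange m (hJ hm) n (hJ hn)
  stable m hm n hn := hd.stable m (hJ hm) n (hJ hn)
  unstable m hm n hn := hd.unstable m (hJ hm) n (hJ hn)

lemma proj_apply (hd : ExpDichotomyOn T J β M P) {n} (hn : n ∈ J) (x : X) :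
    P n (P n x) = P n x :=
  DFunLike.congr_fun (hd.isProj n hn) x

lemma mem_range_iff (hd : ExpDichotomyOn T J β M P) {n} (hn : n ∈ J) {x : X} :
    x ∈ Set.range ⇑(P n) ↔ P n x = x :=
  ⟨fun ⟨a, ha⟩ => by rw [← ha, hd.proj_apply hn], fun h => ⟨x, h⟩⟩

lemma commute_apply (hd : ExpDichotomyOn T J β M P) {m n} (hm : m ∈ J) (hn : n ∈ J)
    (h : m ≤ n) (x : X) : P n (evolOp T n m x) = evolOp T n m (P m x) :=
  DFunLike.congr_fun (hd.commute m hm n hn h) x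

lemma norm_proj_le (hd : ExpDichotomyOn T J β M P) {n} (hn : n ∈ J) (x : X) :
    ‖P n x‖ ≤ M * ‖x‖ := by
  have := hd.unstable n hn n hn le_rfl x (P n x) ⟨x, rfl⟩ (evolOp_self_apply T n (P n x))
  simpa using this

lemma eq_zero_of_evol_eq_zero (hd : ExpDichotomyOn T J β M P) {m n} (hm : m ∈ J) (hn : n ∈ J)
    (h : m ≤ n) {w : X} (hw : w ∈ Set.range ⇑(P m)) (h0 : evolOp T n m w = 0) : w = 0 := by
  have := hd.unstable m hm n hn h 0 w hw (by rw [h0, map_zero])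
  simpa using this

lemma exists_preimage (hd : ExpDichotomyOn T J β M P) {m n} (hm : m ∈ J) (hn : n ∈ J)
    (h : m ≤ n) (y : X) : ∃ w, P m w = w ∧ evolOp T n m w = P n y := by
  have : P n y ∈ Set.range ⇑(P n) := ⟨y, rfl⟩
  rw [← hd.isoRange m hm n hn h] at this
  obtain ⟨w, hw, heq⟩ := this
  exact ⟨w, (hd.mem_range_iff hm).mp hw, heq⟩

lemma evol_mem_range (hd : ExpDichotomyOn T J β M P) {m n} (hm : m ∈ J) (hn : n ∈ J)
    (h : m ≤ n) {w : X} (hw : w ∈ Set.range ⇑(P m)) : evolOp T n m w ∈ Set.range ⇑(P n) := by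
  rw [← hd.isoRange m hm n hn h]
  exact ⟨w, hw, rfl⟩


end ExpDichotomyOn

lemma eq_zero_of_forall_le_exp {β K : ℝ} (hβ : 0 < β) {v : X}
    (h : ∀ n : ℕ, ‖v‖ ≤ K * Real.exp (-β * n)) : v = 0 := by
  rw [← norm_le_zero_iff]
  have hlim : Filter.Tendsto (fun n : ℕ => K * Real.exp (-β * n)) Filter.atTop (nhds 0) := by
    have : (fun n : ℕ => K * Real.exp (-β * n)) = fun n : ℕ => K * (Real.exp (-β)) ^ n := by
      funext n
      rw [← Real.exp_nat_mul]
      ring_nf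
    rw [this]
    have h1 : |Real.exp (-β)| < 1 := by
      rw [abs_of_pos (Real.exp_pos _)]
      exact Real.exp_lt_one_iff.mpr (by linarith)
    simpa using (tendsto_pow_atTop_nhds_zero_of_abs_lt_one h1).const_mul K
  exact ge_of_tendsto hlim (Filter.Eventually.of_forall h)

section Aux
variable {T : ℤ → X →L[ℝ] X} {βp Mp βm Mm : ℝ} {Pp Pm : ℤ → X →L[ℝ] X}

/-- unique preimages within ranges -/
lemma ExpDichotomyOn.evol_injOn (hd : ExpDichotomyOn T J β M P) {m n} (hm : m ∈ J) (hn : n ∈ J)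
    (h : m ≤ n) {w1 w2 : X} (h1 : P m w1 = w1) (h2 : P m w2 = w2)
    (he : evolOp T n m w1 = evolOp T n m w2) : w1 = w2 := by
  have hmem : w1 - w2 ∈ Set.range ⇑(P m) := ⟨w1 - w2, by rw [map_sub, h1, h2]⟩
  have := hd.eq_zero_of_evol_eq_zero hm hn h hmem (by rw [map_sub, he, sub_self])
  exact sub_eq_zero.mp this

lemma mem_stableSet_iff (hp : ExpDichotomyOn T (Set.Ici 0) βp Mp Pp) {x : X} :
    x ∈ stableSet T ↔ Pp 0 x = 0 := by
  constructor
  · rintro ⟨xs, ⟨C, hC⟩, hx0, hrec⟩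
    have horbit : ∀ n : ℤ, 0 ≤ n → xs n = evolOp T n 0 x := by
      refine Int.le_induction ?_ ?_
      · rw [evolOp_self_apply, hx0]
      · intro n hn ih
        rw [hrec n hn, ih, evolOp_succ_apply T hn]
    have hC0 : 0 ≤ C := le_trans (norm_nonneg _) (hC 0 le_rfl)
    refine eq_zero_of_forall_le_exp (K := Mp * C) hp.beta_pos fun n => ?_
    have hn0 : (0:ℤ) ≤ (n:ℤ) := Int.ofNat_nonneg n
    have hmem : Pp 0 x ∈ Set.range ⇑(Pp 0) := ⟨x, rfl⟩
    have heq : evolOp T (n:ℤ) 0 (Pp 0 x) = Pp (n:ℤ) (xs (n:ℤ)) := by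
      rw [horbit n hn0, hp.commute_apply self_mem_Ici (mem_Ici.mpr hn0) hn0]
    have := hp.unstable 0 self_mem_Ici (n:ℤ) (mem_Ici.mpr hn0) hn0 (xs (n:ℤ)) (Pp 0 x) hmem heq
    have h1 : ‖xs (n:ℤ)‖ ≤ C := hC _ hn0
    have h3 : (((n:ℤ) - 0 : ℤ) : ℝ) = (n:ℝ) := by push_cast; ring
    rw [h3] at this
    calc ‖Pp 0 x‖ ≤ Mp * Real.exp (-βp * (n:ℝ)) * ‖xs (n:ℤ)‖ := this
      _ ≤ Mp * Real.exp (-βp * (n:ℝ)) * C :=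
          mul_le_mul_of_nonneg_left h1 (le_of_lt (mul_pos hp.bound_pos (Real.exp_pos _)))
      _ = Mp * C * Real.exp (-βp * n) := by ring
  · intro hx
    refine ⟨fun n => evolOp T n 0 x, ⟨Mp * ‖x‖, fun n hn => ?_⟩, evolOp_self_apply T 0 x, ?_⟩
    · have := hp.stable 0 self_mem_Ici n (mem_Ici.mpr hn) hn x
      rw [hx, sub_zero] at this
      calc ‖evolOp T n 0 x‖ ≤ Mp * Real.exp (-βp * ((n - 0 : ℤ) : ℝ)) * ‖x‖ := this
        _ ≤ Mp * 1 * ‖x‖ := by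
            gcongr
            · exact le_of_lt hp.bound_pos
            · rw [Real.exp_le_one_iff]
              have : (0:ℝ) ≤ ((n - 0 : ℤ) : ℝ) := by exact_mod_cast (by omega : (0:ℤ) ≤ n - 0)
              nlinarith [hp.beta_pos]
        _ = Mp * ‖x‖ := by ring
    · intro n hn
      exact evolOp_succ_apply T hn x

lemma mem_unstableSet_iff (hm : ExpDichotomyOn T (Set.Iic 0) βm Mm Pm) {x : X} :
    x ∈ unstableSet T ↔ Pm 0 x = x := by
  constructor
  · rintro ⟨xs, ⟨C, hC⟩, hx0, hrec⟩
    have horbit : ∀ m : ℤ, m ≤ 0 → evolOp T 0 m (xs m) = x := by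
      intro m hm0
      refine Int.le_induction_down (motive := fun m _ => evolOp T 0 m (xs m) = x) ?_ ?_ m hm0
      · show evolOp T 0 0 (xs 0) = x
        rw [evolOp_self_apply, hx0]
      · intro n hn ih
        show evolOp T 0 (n - 1) (xs (n - 1)) = x
        replace ih : evolOp T 0 n (xs n) = x := ih
        have hstep : xs n = T (n - 1) (xs (n - 1)) := by
          have := hrec (n - 1) (by omega)
          rwa [sub_add_cancel] at this
        have : evolOp T n (n - 1) (xs (n - 1)) = xs n := by
          have h1 : evolOp T (n - 1 + 1) (n - 1) (xs (n - 1)) = T (n - 1) (xs (n - 1)) := by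
            rw [evolOp_succ_apply T le_rfl, evolOp_self_apply]
          rw [← hstep] at h1
          rwa [sub_add_cancel] at h1
        rw [← ih, ← this, evolOp_comp_apply T (by omega) hn]
    have hC0 : 0 ≤ C := le_trans (norm_nonneg _) (hC 0 le_rfl)
    have hz : x - Pm 0 x = 0 := by
      refine eq_zero_of_forall_le_exp (K := Mm * C) hm.beta_pos fun n => ?_
      have hn0 : (-(n:ℤ)) ≤ 0 := by omega
      have heq : x - Pm 0 x = evolOp T 0 (-(n:ℤ)) (xs (-(n:ℤ)) - Pm (-(n:ℤ)) (xs (-(n:ℤ)))) := by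
        rw [map_sub, ← hm.commute_apply (mem_Iic.mpr hn0) self_mem_Iic hn0, horbit _ hn0]
      rw [heq]
      have := hm.stable (-(n:ℤ)) (mem_Iic.mpr hn0) 0 self_mem_Iic hn0 (xs (-(n:ℤ)))
      calc ‖evolOp T 0 (-(n:ℤ)) (xs (-(n:ℤ)) - Pm (-(n:ℤ)) (xs (-(n:ℤ))))‖
          ≤ Mm * Real.exp (-βm * (((0:ℤ) - (-(n:ℤ)) : ℤ) : ℝ)) * ‖xs (-(n:ℤ))‖ := this
        _ ≤ Mm * C * Real.exp (-βm * n) := by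
            have h1 : ‖xs (-(n:ℤ))‖ ≤ C := hC _ hn0
            have h3 : (((0:ℤ) - (-(n:ℤ)) : ℤ) : ℝ) = (n:ℝ) := by push_cast; ring
            rw [h3]
            calc Mm * Real.exp (-βm * (n:ℝ)) * ‖xs (-(n:ℤ))‖
                ≤ Mm * Real.exp (-βm * (n:ℝ)) * C :=
                  mul_le_mul_of_nonneg_left h1 (le_of_lt (mul_pos hm.bound_pos (Real.exp_pos _)))
              _ = Mm * C * Real.exp (-βm * n) := by ring
    rw [← sub_eq_zero]
    rw [← neg_sub]
    rw [hz, neg_zero]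
  · intro hx
    have hxs : ∀ m : ℤ, m ≤ 0 → ∃ w, Pm m w = w ∧ evolOp T 0 m w = x := by
      intro m hm0
      obtain ⟨w, h1, h2⟩ := hm.exists_preimage (mem_Iic.mpr hm0) self_mem_Iic hm0 x
      exact ⟨w, h1, by rwa [hx] at h2⟩
    classical
    set xs : ℤ → X := fun m => if h : m ≤ 0 then Classical.choose (hxs m h) else 0 with hxs_def
    have hprop : ∀ m : ℤ, (h : m ≤ 0) → Pm m (xs m) = xs m ∧ evolOp T 0 m (xs m) = x := by
      intro m h
      simp only [hxs_def, dif_pos h]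
      exact Classical.choose_spec (hxs m h)
    refine ⟨xs, ⟨Mm * ‖x‖, fun n hn => ?_⟩, ?_, fun n hn => ?_⟩
    · obtain ⟨h1, h2⟩ := hprop n hn
      have hmem : xs n ∈ Set.range ⇑(Pm n) := ⟨xs n, h1⟩
      have := hm.unstable n (mem_Iic.mpr hn) 0 self_mem_Iic hn x (xs n) hmem (by rw [h2, hx])
      calc ‖xs n‖ ≤ Mm * Real.exp (-βm * (((0:ℤ) - n : ℤ) : ℝ)) * ‖x‖ := this
        _ ≤ Mm * 1 * ‖x‖ := by
            gcongr
            · exact le_of_lt hm.bound_pos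
            · rw [Real.exp_le_one_iff]
              have : (0:ℝ) ≤ (((0:ℤ) - n : ℤ) : ℝ) := by exact_mod_cast (by omega : (0:ℤ) ≤ 0 - n)
              nlinarith [hm.beta_pos]
        _ = Mm * ‖x‖ := by ring
    · -- xs 0 = x
      obtain ⟨h1, h2⟩ := hprop 0 le_rfl
      rw [evolOp_self_apply] at h2
      exact h2
    · -- recurrence
      obtain ⟨h1, h2⟩ := hprop n (le_of_lt hn)
      have hn1 : n + 1 ≤ 0 := by omega
      obtain ⟨g1, g2⟩ := hprop (n+1) hn1
      -- T n (xs n) also satisfies the two properties at n+1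
      have ha : Pm (n+1) (T n (xs n)) = T n (xs n) := by
        have : T n (xs n) = evolOp T (n+1) n (xs n) := by
          rw [evolOp_succ_apply T le_rfl, evolOp_self_apply]
        rw [this, hm.commute_apply (mem_Iic.mpr (le_of_lt hn)) (mem_Iic.mpr hn1) (by omega), h1]
      have hb : evolOp T 0 (n+1) (T n (xs n)) = x := by
        have : T n (xs n) = evolOp T (n+1) n (xs n) := by
          rw [evolOp_succ_apply T le_rfl, evolOp_self_apply]
        rw [this, evolOp_comp_apply T (by omega) hn1, h2]
      exact hm.evol_injOn (mem_Iic.mpr hn1) self_mem_Iic hn1 g1 ha (by rw [g2, hb])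

/-- Forward direction: a dichotomy on all of ℤ yields the direct sum decomposition. -/
lemma directSumDecomp_of_univ {β M : ℝ} {P : ℤ → X →L[ℝ] X}
    (h : ExpDichotomyOn T Set.univ β M P) : DirectSumDecomp T := by
  have hp : ExpDichotomyOn T (Set.Ici 0) β M P := h.mono (Set.subset_univ _)
  have hm : ExpDichotomyOn T (Set.Iic 0) β M P := h.mono (Set.subset_univ _)
  intro x
  refine ⟨(x - P 0 x, P 0 x), ⟨?_, ?_, by simp⟩, ?_⟩
  · rw [mem_stableSet_iff hp]
    simp [map_sub, hp.proj_apply self_mem_Ici]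
  · rw [mem_unstableSet_iff hm]
    exact hm.proj_apply self_mem_Iic x
  · rintro ⟨s, u⟩ ⟨hs, hu, hsum⟩
    rw [mem_stableSet_iff hp] at hs
    rw [mem_unstableSet_iff hm] at hu
    have : P 0 x = u := by rw [hsum, map_add, hs, hu, zero_add]
    have hs' : s = x - P 0 x := by rw [this, hsum]; abel
    simp only [Prod.mk.injEq]
    exact ⟨by rw [hs'], by rw [this]⟩

variable (hp : ExpDichotomyOn T (Set.Ici 0) βp Mp Pp)
  (hm : ExpDichotomyOn T (Set.Iic 0) βm Mm Pm) (hd : DirectSumDecomp T)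

include hp hm hd

lemma zero_mem_stable : (0:X) ∈ stableSet T := (mem_stableSet_iff hp).mpr (map_zero _)
lemma zero_mem_unstable : (0:X) ∈ unstableSet T := (mem_unstableSet_iff hm).mpr (map_zero _)

lemma disjoint_SU {x : X} (hxS : x ∈ stableSet T) (hxU : x ∈ unstableSet T) : x = 0 := by
  obtain ⟨su, _, huniq⟩ := hd x
  have h1 : (x, (0:X)) = su := huniq (x, 0) ⟨hxS, zero_mem_unstable hp hm hd, by simp⟩
  have h2 : ((0:X), x) = su := huniq (0, x) ⟨zero_mem_stable hp hm hd, hxU, by simp⟩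
  have := h1.trans h2.symm
  exact (Prod.mk.injEq _ _ _ _).mp this |>.1

lemma mem_Um_iff {x : X} : x ∈ LinearMap.range (Pm 0 : X →ₗ[ℝ] X) ↔ Pm 0 x = x :=
  ⟨fun ⟨a, ha⟩ => by rw [← ha]; exact hm.proj_apply self_mem_Iic a, fun h => ⟨x, h⟩⟩

lemma isCompl_SU : IsCompl (LinearMap.ker (Pp 0 : X →ₗ[ℝ] X)) (LinearMap.range (Pm 0 : X →ₗ[ℝ] X)) := by
  constructor
  · rw [Submodule.disjoint_def]
    intro x hxS hxU
    refine disjoint_SU hp hm hd ?_ ?_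
    · exact (mem_stableSet_iff hp).mpr (LinearMap.mem_ker.mp hxS)
    · exact (mem_unstableSet_iff hm).mpr ((mem_Um_iff hp hm hd).mp hxU)
  · rw [codisjoint_iff_le_sup]
    intro x _
    obtain ⟨⟨s, u⟩, ⟨hs, hu, hsum⟩, -⟩ := hd x
    have hsS : s ∈ LinearMap.ker (Pp 0 : X →ₗ[ℝ] X) := LinearMap.mem_ker.mpr ((mem_stableSet_iff hp).mp hs)
    have huU : u ∈ LinearMap.range (Pm 0 : X →ₗ[ℝ] X) := (mem_Um_iff hp hm hd).mpr ((mem_unstableSet_iff hm).mp hu)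
    rw [hsum]
    exact Submodule.add_mem_sup hsS huU

/-- The ranks agree. -/
lemma rank_eq {kp km : ℕ}
    (hrkp : ∀ n ∈ Set.Ici (0:ℤ), FiniteDimensional ℝ (LinearMap.range (Pp n : X →ₗ[ℝ] X)) ∧
      Module.finrank ℝ (LinearMap.range (Pp n : X →ₗ[ℝ] X)) = kp)
    (hrkm : ∀ n ∈ Set.Iic (0:ℤ), FiniteDimensional ℝ (LinearMap.range (Pm n : X →ₗ[ℝ] X)) ∧
      Module.finrank ℝ (LinearMap.range (Pm n : X →ₗ[ℝ] X)) = km) : kp = km := by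
  obtain ⟨hfp, hkp⟩ := hrkp 0 self_mem_Ici
  obtain ⟨hfm, hkm⟩ := hrkm 0 self_mem_Iic
  -- linear equiv from range (Pm 0) to range (Pp 0), u ↦ Pp 0 u
  set f : LinearMap.range (Pm 0 : X →ₗ[ℝ] X) →ₗ[ℝ] LinearMap.range (Pp 0 : X →ₗ[ℝ] X) :=
    LinearMap.codRestrict _ ((Pp 0 : X →ₗ[ℝ] X).comp (LinearMap.range (Pm 0 : X →ₗ[ℝ] X)).subtype)
      (fun u => LinearMap.mem_range_self _ _) with hf
  have hinj : Function.Injective f := by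
    rw [← LinearMap.ker_eq_bot, LinearMap.ker_eq_bot']
    intro ⟨u, hu⟩ h0
    have h0' : Pp 0 u = 0 := congrArg Subtype.val h0
    have : u = 0 := by
      refine disjoint_SU hp hm hd ?_ ?_
      · exact (mem_stableSet_iff hp).mpr h0'
      · exact (mem_unstableSet_iff hm).mpr ((mem_Um_iff hp hm hd).mp hu)
    exact Subtype.ext this
  have hsurj : Function.Surjective f := by
    rintro ⟨y, hy⟩
    have hyfix : Pp 0 y = y := by
      obtain ⟨a, ha⟩ := hy
      rw [← ha]; exact hp.proj_apply self_mem_Ici a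
    obtain ⟨⟨s, u⟩, ⟨hs, hu, hsum⟩, -⟩ := hd y
    have hs0 : Pp 0 s = 0 := (mem_stableSet_iff hp).mp hs
    have huU : u ∈ LinearMap.range (Pm 0 : X →ₗ[ℝ] X) := (mem_Um_iff hp hm hd).mpr ((mem_unstableSet_iff hm).mp hu)
    refine ⟨⟨u, huU⟩, ?_⟩
    apply Subtype.ext
    show Pp 0 u = y
    have : Pp 0 y = Pp 0 s + Pp 0 u := by rw [hsum, map_add]
    rw [hyfix, hs0, zero_add] at this
    exact this.symm
  have e := LinearEquiv.ofBijective f ⟨hinj, hsurj⟩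
  rw [← hkp, ← hkm]
  exact (e.finrank_eq).symm

end Aux

section Aux2
variable {T : ℤ → X →L[ℝ] X} {βp Mp βm Mm : ℝ} {Pp Pm : ℤ → X →L[ℝ] X}

lemma exists_hInv (hp : ExpDichotomyOn T (Set.Ici 0) βp Mp Pp) {n : ℤ} (hn : 0 ≤ n) :
    ∃ H : X →L[ℝ] X, (∀ x, Pp 0 (H x) = H x) ∧ (∀ x, evolOp T n 0 (H x) = Pp n x) := by
  have hnJ : n ∈ Set.Ici (0:ℤ) := mem_Ici.mpr hn
  set p0 : Submodule ℝ X := LinearMap.range (Pp 0 : X →ₗ[ℝ] X) with hp0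
  set pn : Submodule ℝ X := LinearMap.range (Pp n : X →ₗ[ℝ] X) with hpn
  have hmem0 : ∀ x : X, x ∈ p0 ↔ Pp 0 x = x := fun x =>
    ⟨fun ⟨a, ha⟩ => by rw [← ha]; exact hp.proj_apply self_mem_Ici a, fun h => ⟨x, h⟩⟩
  have hmemn : ∀ x : X, x ∈ pn ↔ Pp n x = x := fun x =>
    ⟨fun ⟨a, ha⟩ => by rw [← ha]; exact hp.proj_apply hnJ a, fun h => ⟨x, h⟩⟩
  have hmap : ∀ x ∈ p0, evolOp T n 0 x ∈ pn := by
    intro x hx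
    rw [hmemn, ← (hmem0 x).mp hx, hp.commute_apply self_mem_Ici hnJ hn,
      hp.proj_apply self_mem_Ici, (hmem0 x).mp hx]
  set En : p0 →ₗ[ℝ] pn := ((evolOp T n 0 : X →L[ℝ] X) : X →ₗ[ℝ] X).restrict hmap with hEn
  have hbij : Function.Bijective En := by
    constructor
    · rintro ⟨a, ha⟩ ⟨b, hb⟩ hab
      have : evolOp T n 0 a = evolOp T n 0 b := congrArg Subtype.val hab
      exact Subtype.ext
        (hp.evol_injOn self_mem_Ici hnJ hn ((hmem0 a).mp ha) ((hmem0 b).mp hb) this)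
    · rintro ⟨y, hy⟩
      obtain ⟨w, hw1, hw2⟩ := hp.exists_preimage self_mem_Ici hnJ hn y
      refine ⟨⟨w, (hmem0 w).mpr hw1⟩, Subtype.ext ?_⟩
      show evolOp T n 0 w = y
      rw [hw2, (hmemn y).mp hy]
  set e := LinearEquiv.ofBijective En hbij with he
  set Hlin : X →ₗ[ℝ] X :=
    p0.subtype ∘ₗ (e.symm : pn →ₗ[ℝ] p0) ∘ₗ
      (LinearMap.codRestrict pn ((Pp n : X →L[ℝ] X) : X →ₗ[ℝ] X)
        (fun x => LinearMap.mem_range_self _ x)) with hHlin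
  have key1 : ∀ x, Pp 0 (Hlin x) = Hlin x := by
    intro x
    exact (hmem0 _).mp (e.symm _).2
  have key2 : ∀ x, evolOp T n 0 (Hlin x) = Pp n x := by
    intro x
    have : En (e.symm ⟨Pp n x, LinearMap.mem_range_self _ x⟩)
        = ⟨Pp n x, LinearMap.mem_range_self _ x⟩ := e.apply_symm_apply _
    exact congrArg Subtype.val this
  have hbound : ∀ x, ‖Hlin x‖ ≤ Mp * ‖x‖ := by
    intro x
    have hmem : Hlin x ∈ Set.range ⇑(Pp 0) := ⟨Hlin x, key1 x⟩
    have := hp.unstable 0 self_mem_Ici n hnJ hn x (Hlin x) hmem (key2 x)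
    calc ‖Hlin x‖ ≤ Mp * Real.exp (-βp * ((n - 0 : ℤ) : ℝ)) * ‖x‖ := this
      _ ≤ Mp * 1 * ‖x‖ := by
          gcongr
          · exact le_of_lt hp.bound_pos
          · rw [Real.exp_le_one_iff]
            have : (0:ℝ) ≤ ((n - 0 : ℤ) : ℝ) := by exact_mod_cast (by omega : (0:ℤ) ≤ n - 0)
            nlinarith [hp.beta_pos]
      _ = Mp * ‖x‖ := by ring
  exact ⟨Hlin.mkContinuous Mp hbound, key1, key2⟩

lemma exists_gInv (hm : ExpDichotomyOn T (Set.Iic 0) βm Mm Pm) {n : ℤ} (hn : n ≤ 0) :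
    ∃ G : X →L[ℝ] X, (∀ x, Pm n (G x) = G x) ∧ (∀ x, evolOp T 0 n (G x) = Pm 0 x) := by
  have hnJ : n ∈ Set.Iic (0:ℤ) := mem_Iic.mpr hn
  set p0 : Submodule ℝ X := LinearMap.range (Pm 0 : X →ₗ[ℝ] X) with hp0
  set pn : Submodule ℝ X := LinearMap.range (Pm n : X →ₗ[ℝ] X) with hpn
  have hmem0 : ∀ x : X, x ∈ p0 ↔ Pm 0 x = x := fun x =>
    ⟨fun ⟨a, ha⟩ => by rw [← ha]; exact hm.proj_apply self_mem_Iic a, fun h => ⟨x, h⟩⟩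
  have hmemn : ∀ x : X, x ∈ pn ↔ Pm n x = x := fun x =>
    ⟨fun ⟨a, ha⟩ => by rw [← ha]; exact hm.proj_apply hnJ a, fun h => ⟨x, h⟩⟩
  have hmap : ∀ x ∈ pn, evolOp T 0 n x ∈ p0 := by
    intro x hx
    rw [hmem0, ← (hmemn x).mp hx, hm.commute_apply hnJ self_mem_Iic hn,
      hm.proj_apply hnJ, (hmemn x).mp hx]
  set En : pn →ₗ[ℝ] p0 := ((evolOp T 0 n : X →L[ℝ] X) : X →ₗ[ℝ] X).restrict hmap with hEn
  have hbij : Function.Bijective En := by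
    constructor
    · rintro ⟨a, ha⟩ ⟨b, hb⟩ hab
      have : evolOp T 0 n a = evolOp T 0 n b := congrArg Subtype.val hab
      exact Subtype.ext
        (hm.evol_injOn hnJ self_mem_Iic hn ((hmemn a).mp ha) ((hmemn b).mp hb) this)
    · rintro ⟨y, hy⟩
      obtain ⟨w, hw1, hw2⟩ := hm.exists_preimage hnJ self_mem_Iic hn y
      refine ⟨⟨w, (hmemn w).mpr hw1⟩, Subtype.ext ?_⟩
      show evolOp T 0 n w = y
      rw [hw2, (hmem0 y).mp hy]
  set e := LinearEquiv.ofBijective En hbij with he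
  set Glin : X →ₗ[ℝ] X :=
    pn.subtype ∘ₗ (e.symm : p0 →ₗ[ℝ] pn) ∘ₗ
      (LinearMap.codRestrict p0 ((Pm 0 : X →L[ℝ] X) : X →ₗ[ℝ] X)
        (fun x => LinearMap.mem_range_self _ x)) with hGlin
  have key1 : ∀ x, Pm n (Glin x) = Glin x := by
    intro x
    exact (hmemn _).mp (e.symm _).2
  have key2 : ∀ x, evolOp T 0 n (Glin x) = Pm 0 x := by
    intro x
    have : En (e.symm ⟨Pm 0 x, LinearMap.mem_range_self _ x⟩)
        = ⟨Pm 0 x, LinearMap.mem_range_self _ x⟩ := e.apply_symm_apply _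
    exact congrArg Subtype.val this
  have hbound : ∀ x, ‖Glin x‖ ≤ Mm * ‖x‖ := by
    intro x
    have hmem : Glin x ∈ Set.range ⇑(Pm n) := ⟨Glin x, key1 x⟩
    have := hm.unstable n hnJ 0 self_mem_Iic hn x (Glin x) hmem (key2 x)
    calc ‖Glin x‖ ≤ Mm * Real.exp (-βm * (((0:ℤ) - n : ℤ) : ℝ)) * ‖x‖ := this
      _ ≤ Mm * 1 * ‖x‖ := by
          gcongr
          · exact le_of_lt hm.bound_pos
          · rw [Real.exp_le_one_iff]
            have : (0:ℝ) ≤ (((0:ℤ) - n : ℤ) : ℝ) := by exact_mod_cast (by omega : (0:ℤ) ≤ 0 - n)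
            nlinarith [hm.beta_pos]
      _ = Mm * ‖x‖ := by ring
  exact ⟨Glin.mkContinuous Mm hbound, key1, key2⟩


lemma exists_Q (hp : ExpDichotomyOn T (Set.Ici 0) βp Mp Pp)
    (hm : ExpDichotomyOn T (Set.Iic 0) βm Mm Pm) (hd : DirectSumDecomp T) :
    ∃ Q : X →L[ℝ] X, (∀ x, Pm 0 (Q x) = Q x) ∧ (∀ u, Pm 0 u = u → Q u = u) ∧
      (∀ x, Pp 0 (x - Q x) = 0) := by
  set Sp : Submodule ℝ X := LinearMap.ker (Pp 0 : X →ₗ[ℝ] X) with hSp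
  set Um : Submodule ℝ X := LinearMap.range (Pm 0 : X →ₗ[ℝ] X) with hUm
  have hSpc : IsClosed (Sp : Set X) := ContinuousLinearMap.isClosed_ker (Pp 0)
  have hUmc : IsClosed (Um : Set X) := by
    have : (Um : Set X) = (LinearMap.ker (((Pm 0) - ContinuousLinearMap.id ℝ X : X →L[ℝ] X) : X →ₗ[ℝ] X) : Set X) := by
      ext x
      simp only [SetLike.mem_coe, LinearMap.mem_ker, ContinuousLinearMap.coe_coe, ContinuousLinearMap.sub_apply,
        ContinuousLinearMap.id_apply, sub_eq_zero]
      exact mem_Um_iff hp hm hd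
    rw [this]
    exact ContinuousLinearMap.isClosed_ker _
  have hcompl : IsCompl Um Sp := (isCompl_SU hp hm hd).symm
  set proj := Um.linearProjOfClosedCompl Sp hcompl hUmc hSpc with hproj
  refine ⟨Um.subtypeL.comp proj, ?_, ?_, ?_⟩
  · intro x
    exact (mem_Um_iff hp hm hd).mp (proj x).2
  · intro u hu
    show ((proj u : Um) : X) = u
    rw [Submodule.coe_continuous_linearProjOfClosedCompl']
    exact congrArg Subtype.val (Submodule.linearProjOfIsCompl_apply_left hcompl
      ⟨u, (mem_Um_iff hp hm hd).mpr hu⟩)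
  · intro x
    have := Submodule.projection_add_projection_eq_self hcompl x
    rw [Submodule.projection_apply, Submodule.projection_apply] at this
    have hx : x - (Um.subtypeL.comp proj) x = ((Sp.linearProjOfIsCompl Um hcompl.symm x : Sp) : X) := by
      show x - ((proj x : Um) : X) = _
      rw [Submodule.coe_continuous_linearProjOfClosedCompl']
      exact (eq_sub_of_add_eq' this).symm
    rw [hx]
    exact LinearMap.mem_ker.mp (Sp.linearProjOfIsCompl Um hcompl.symm x).2


set_option maxHeartbeats 4000000 in
lemma exists_univ_dichotomy (hp : ExpDichotomyOn T (Set.Ici 0) βp Mp Pp)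
    (hm : ExpDichotomyOn T (Set.Iic 0) βm Mm Pm) (hd : DirectSumDecomp T) :
    ∃ (β M : ℝ) (P : ℤ → X →L[ℝ] X), ExpDichotomyOn T Set.univ β M P := by
  classical
  obtain ⟨Q, hQmem, hQfix, hQsub⟩ := exists_Q hp hm hd
  have hQker : ∀ s : X, Pp 0 s = 0 → Q s = 0 := by
    intro s hs
    have h1 : Pp 0 (Q s) = 0 := by
      have h2 := hQsub s
      have : Pp 0 (Q s) = Pp 0 s - Pp 0 (s - Q s) := by rw [map_sub]; abel
      rw [this, hs, h2, sub_zero]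
    exact disjoint_SU hp hm hd ((mem_stableSet_iff hp).mpr h1)
      ((mem_unstableSet_iff hm).mpr (hQmem s))
  have hQidem : ∀ x, Q (Q x) = Q x := fun x => hQfix _ (hQmem x)
  have hQPp : ∀ x, Q (Pp 0 x) = Q x := by
    intro x
    have h1 : Pp 0 (x - Pp 0 x) = 0 := by
      rw [map_sub, hp.proj_apply self_mem_Ici, sub_self]
    have := hQker _ h1
    rw [map_sub, sub_eq_zero] at this
    exact this.symm
  choose H hH1 hH2 using fun (n : ℤ) (hn : 0 ≤ n) => exists_hInv hp hn
  choose G hG1 hG2 using fun (n : ℤ) (hn : n ≤ 0) => exists_gInv hm hn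
  set P : ℤ → X →L[ℝ] X := fun n =>
    if h : 0 ≤ n then (evolOp T n 0).comp (Q.comp (H n h))
    else (G n (not_le.mp h).le).comp (Q.comp (evolOp T 0 n)) with hPdef
  have hPplus : ∀ n (h : 0 ≤ n) (x : X), P n x = evolOp T n 0 (Q (H n h x)) := by
    intro n h x
    simp only [hPdef, dif_pos h]
    rfl
  have hPminus : ∀ n (h : n ≤ 0) (hn : n ≠ 0) (x : X), P n x = G n h (Q (evolOp T 0 n x)) := by
    intro n h hn x
    simp only [hPdef, dif_neg (by omega : ¬ (0:ℤ) ≤ n)]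
    rfl
  have hH0 : ∀ (h : (0:ℤ) ≤ 0) (x : X), H 0 h x = Pp 0 x := by
    intro h x
    have := hH2 0 h x
    rwa [evolOp_self_apply] at this
  have hP0 : ∀ x, P 0 x = Q x := by
    intro x
    rw [hPplus 0 le_rfl, hH0, evolOp_self_apply, hQPp]
  -- facts for m ≤ 0
  have hM1 : ∀ m (h : m ≤ 0) (x : X), Pm m (P m x) = P m x := by
    intro m h x
    rcases eq_or_lt_of_le h with h' | h'
    · subst h'
      rw [hP0]
      exact hQmem x
    · rw [hPminus m h (by omega)]
      exact hG1 m h _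
  have hM2 : ∀ m (h : m ≤ 0) (x : X), evolOp T 0 m (P m x) = Q (evolOp T 0 m x) := by
    intro m h x
    rcases eq_or_lt_of_le h with h' | h'
    · subst h'
      rw [hP0, evolOp_self_apply, evolOp_self_apply]
    · rw [hPminus m h (by omega), hG2 m h _, hQmem]
  -- injectivity on U
  have hUinj : ∀ n, 0 ≤ n → ∀ u v : X, Pm 0 u = u → Pm 0 v = v →
      evolOp T n 0 u = evolOp T n 0 v → u = v := by
    intro n hn u v hu hv he
    have hd0 : evolOp T n 0 (u - v) = 0 := by rw [map_sub, he, sub_self]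
    have h1 : evolOp T n 0 (Pp 0 (u - v)) = 0 := by
      rw [← hp.commute_apply self_mem_Ici (mem_Ici.mpr hn) hn, hd0, map_zero]
    have h2 : Pp 0 (u - v) = 0 :=
      hp.eq_zero_of_evol_eq_zero self_mem_Ici (mem_Ici.mpr hn) hn ⟨u - v, rfl⟩ h1
    have h3 : u - v = 0 := disjoint_SU hp hm hd ((mem_stableSet_iff hp).mpr h2)
      ((mem_unstableSet_iff hm).mpr (by rw [map_sub, hu, hv]))
    exact sub_eq_zero.mp h3
  -- fixed points of P n, n ≥ 0
  have hPfixplus : ∀ n (h : 0 ≤ n) (u : X), Pm 0 u = u →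
      P n (evolOp T n 0 u) = evolOp T n 0 u := by
    intro n h u hu
    have hkey : H n h (evolOp T n 0 u) = Pp 0 u := by
      refine hp.evol_injOn self_mem_Ici (mem_Ici.mpr h) h (hH1 n h _)
        (hp.proj_apply self_mem_Ici u) ?_
      rw [hH2 n h _, hp.commute_apply self_mem_Ici (mem_Ici.mpr h) h]
    rw [hPplus n h, hkey, hQPp, hQfix u hu]
  have hrangeplus : ∀ n (h : 0 ≤ n),
      Set.range ⇑(P n) = ⇑(evolOp T n 0) '' {u : X | Pm 0 u = u} := by
    intro n h
    ext y
    constructor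
    · rintro ⟨x, rfl⟩
      exact ⟨Q (H n h x), hQmem _, (hPplus n h x).symm⟩
    · rintro ⟨u, hu, rfl⟩
      exact ⟨evolOp T n 0 u, hPfixplus n h u hu⟩
  have hPfixminus : ∀ m (h : m ≤ 0) (w : X), Pm m w = w →
      Q (evolOp T 0 m w) = evolOp T 0 m w → P m w = w := by
    intro m h w h1 h2
    refine hm.evol_injOn (mem_Iic.mpr h) self_mem_Iic h (hM1 m h w) h1 ?_
    rw [hM2 m h, h2]
  have hrangeminus : ∀ m (h : m ≤ 0),
      Set.range ⇑(P m) = {w : X | Pm m w = w ∧ Q (evolOp T 0 m w) = evolOp T 0 m w} := by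
    intro m h
    ext w
    constructor
    · rintro ⟨x, rfl⟩
      refine ⟨hM1 m h x, ?_⟩
      rw [hM2 m h, hQidem]
    · rintro ⟨h1, h2⟩
      exact ⟨w, hPfixminus m h w h1 h2⟩
  -- image of Pm-fixed vectors is Pm0-fixed
  have himg : ∀ m (h : m ≤ 0) (w : X), Pm m w = w → Pm 0 (evolOp T 0 m w) = evolOp T 0 m w := by
    intro m h w hw
    rw [hm.commute_apply (mem_Iic.mpr h) self_mem_Iic h, hw]
  -- norm bounds on H, G
  have hHnorm : ∀ n (h : 0 ≤ n) (x : X),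
      ‖H n h x‖ ≤ Mp * Real.exp (-βp * (n : ℝ)) * ‖x‖ := by
    intro n h x
    have := hp.unstable 0 self_mem_Ici n (mem_Ici.mpr h) h x (H n h x)
      ⟨H n h x, hH1 n h x⟩ (hH2 n h x)
    rwa [show ((n - 0 : ℤ) : ℝ) = (n : ℝ) by push_cast; ring] at this
  have hGnorm : ∀ n (h : n ≤ 0) (x : X),
      ‖G n h x‖ ≤ Mm * Real.exp (βm * (n : ℝ)) * ‖x‖ := by
    intro n h x
    have := hm.unstable n (mem_Iic.mpr h) 0 self_mem_Iic h x (G n h x)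
      ⟨G n h x, hG1 n h x⟩ (hG2 n h x)
    rwa [show -βm * (((0:ℤ) - n : ℤ) : ℝ) = βm * (n : ℝ) by push_cast; ring] at this
  -- operators R = I - Q and D = Pm 0 - Q
  set R : X →L[ℝ] X := ContinuousLinearMap.id ℝ X - Q with hRdef
  set D : X →L[ℝ] X := Pm 0 - Q with hDdef
  have hRapp : ∀ x, R x = x - Q x := fun x => rfl
  have hDapp : ∀ x, D x = Pm 0 x - Q x := fun x => rfl
  have hDU : ∀ u : X, Pm 0 u = u → D u = 0 := by
    intro u hu
    rw [hDapp, hu, hQfix u hu, sub_self]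
  set β : ℝ := min βp βm with hβdef
  have hβpos : 0 < β := lt_min hp.beta_pos hm.beta_pos
  have hβp : β ≤ βp := min_le_left _ _
  have hβm : β ≤ βm := min_le_right _ _
  set nR : ℝ := ‖R‖ with hnRdef
  set nQ : ℝ := ‖Q‖ with hnQdef
  set nD : ℝ := ‖D‖ with hnDdef
  have hnR : 0 ≤ nR := norm_nonneg _
  have hnQ : 0 ≤ nQ := norm_nonneg _
  have hnD : 0 ≤ nD := norm_nonneg _
  have hMp := hp.bound_pos
  have hMm := hm.bound_pos
  set M : ℝ := Mp + Mm + Mp*Mp*nR + Mm*Mm*nD + Mm*(1 + Mm + Mm*Mm*nD) + Mp*Mm*nR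
    + Mp*(Mp + Mp*Mp*nR) + Mp*Mp*nQ + Mp*Mm*nQ + 1 with hMdef
  have t1 : 0 ≤ Mp*Mp*nR := by positivity
  have t2 : 0 ≤ Mm*Mm*nD := by positivity
  have t3 : 0 ≤ Mm*(1 + Mm + Mm*Mm*nD) := by positivity
  have t4 : 0 ≤ Mp*Mm*nR := by positivity
  have t5 : 0 ≤ Mp*(Mp + Mp*Mp*nR) := by positivity
  have t6 : 0 ≤ Mp*Mp*nQ := by positivity
  have t7 : 0 ≤ Mp*Mm*nQ := by positivity
  have hMpos : 0 < M := by rw [hMdef]; linarith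
  refine ⟨β, M, P, hβpos, hMpos, ?_, ?_, ?_, ?_, ?_⟩
  · -- isProj
    intro n _
    ext x
    show P n (P n x) = P n x
    rcases le_or_gt 0 n with h | h
    · rw [hPplus n h x]
      exact hPfixplus n h _ (hQmem _)
    · refine hPfixminus n h.le _ (hM1 n h.le x) ?_
      rw [hM2 n h.le, hQidem]
  · -- commute
    intro m _ n _ hmn
    ext x
    show P n (evolOp T n m x) = evolOp T n m (P m x)
    rcases le_or_gt 0 m with hm0 | hm0
    · -- 0 ≤ m ≤ n
      have hn0 : 0 ≤ n := hm0.trans hmn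
      have hkey : H n hn0 (evolOp T n m x) = H m hm0 x := by
        refine hp.evol_injOn self_mem_Ici (mem_Ici.mpr hn0) hn0
          (hH1 n hn0 _) (hH1 m hm0 _) ?_
        rw [hH2 n hn0 _, ← evolOp_comp_apply T hm0 hmn (H m hm0 x), hH2 m hm0,
          hp.commute_apply (mem_Ici.mpr hm0) (mem_Ici.mpr hn0) hmn]
      rw [hPplus n hn0, hkey, hPplus m hm0, ← evolOp_comp_apply T hm0 hmn]
    · rcases le_or_gt 0 n with hn0 | hn0
      · -- m ≤ 0 ≤ n
        have hkey : H n hn0 (evolOp T n m x) = Pp 0 (evolOp T 0 m x) := by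
          refine hp.evol_injOn self_mem_Ici (mem_Ici.mpr hn0) hn0
            (hH1 n hn0 _) (hp.proj_apply self_mem_Ici _) ?_
          rw [hH2 n hn0 _, ← evolOp_comp_apply T hm0.le hn0 x,
            hp.commute_apply self_mem_Ici (mem_Ici.mpr hn0) hn0]
        rw [hPplus n hn0, hkey, hQPp, ← evolOp_comp_apply T hm0.le hn0 (P m x), hM2 m hm0.le]
      · -- m ≤ n ≤ 0
        refine (hm.evol_injOn (mem_Iic.mpr hn0.le) self_mem_Iic hn0.le ?_ ?_ ?_).symm
        · -- Pm n (evolOp T n m (P m x)) = evolOp T n m (P m x)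
          rw [hm.commute_apply (mem_Iic.mpr hm0.le) (mem_Iic.mpr hn0.le) hmn, hM1 m hm0.le]
        · exact hM1 n hn0.le _
        · rw [hM2 n hn0.le, evolOp_comp_apply T hmn hn0.le, hM2 m hm0.le,
            evolOp_comp_apply T hmn hn0.le]
  · -- isoRange
    intro m _ n _ hmn
    rcases le_or_gt 0 m with hm0 | hm0
    · have hn0 : 0 ≤ n := hm0.trans hmn
      rw [hrangeplus m hm0, hrangeplus n hn0, ← Set.image_comp]
      apply Set.image_congr
      intro u _
      exact evolOp_comp_apply T hm0 hmn u
    · rcases le_or_gt 0 n with hn0 | hn0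
      · -- m ≤ 0 ≤ n
        rw [hrangeminus m hm0.le, hrangeplus n hn0]
        ext y
        constructor
        · rintro ⟨w, ⟨hw1, hw2⟩, rfl⟩
          refine ⟨evolOp T 0 m w, ?_, ?_⟩
          · exact himg m hm0.le w hw1
          · exact evolOp_comp_apply T hm0.le hn0 w
        · rintro ⟨u, hu, rfl⟩
          obtain ⟨w, hw1, hw2⟩ := hm.exists_preimage (mem_Iic.mpr hm0.le) self_mem_Iic hm0.le u
          have hw2' : evolOp T 0 m w = u := by rw [hw2, hu]
          refine ⟨w, ⟨hw1, by rw [hw2', hQfix u hu]⟩, ?_⟩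
          rw [← evolOp_comp_apply T hm0.le hn0 w, hw2']
      · -- m ≤ n ≤ 0
        rw [hrangeminus m hm0.le, hrangeminus n hn0.le]
        ext y
        constructor
        · rintro ⟨w, ⟨hw1, hw2⟩, rfl⟩
          constructor
          · rw [hm.commute_apply (mem_Iic.mpr hm0.le) (mem_Iic.mpr hn0.le) hmn, hw1]
          · rw [evolOp_comp_apply T hmn hn0.le, hw2]
        · rintro ⟨h1, h2⟩
          obtain ⟨w, hw1, hw2⟩ := hm.exists_preimage (mem_Iic.mpr hm0.le)
            (mem_Iic.mpr hn0.le) hmn y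
          have hw2' : evolOp T n m w = y := by rw [hw2, h1]
          refine ⟨w, ⟨hw1, ?_⟩, hw2'⟩
          rw [← evolOp_comp_apply T hmn hn0.le w, hw2', h2]
  · -- stable
    intro m _ n _ hmn x
    have hxnn : (0:ℝ) ≤ ‖x‖ := norm_nonneg x
    set z : ℝ := ((n - m : ℤ) : ℝ) with hzdef
    have hzeq : z = (n:ℝ) - (m:ℝ) := by rw [hzdef]; push_cast; ring
    have hmn' : (m:ℝ) ≤ (n:ℝ) := by exact_mod_cast hmn
    have hz : 0 ≤ z := by rw [hzeq]; linarith
    set E : ℝ := Real.exp (-β * z) with hEdef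
    have hEpos : 0 < E := Real.exp_pos _
    rcases le_or_gt 0 m with hm0 | hm0
    · -- case A : 0 ≤ m ≤ n
      have hn0 : 0 ≤ n := hm0.trans hmn
      have hmr : (0:ℝ) ≤ (m:ℝ) := by exact_mod_cast hm0
      have hnr : (0:ℝ) ≤ (n:ℝ) := by exact_mod_cast hn0
      have e1 : x - P m x = (x - Pp m x) + evolOp T m 0 (R (H m hm0 x)) := by
        rw [hPplus m hm0, hRapp, map_sub, hH2 m hm0]
        abel
      have b1 := hp.stable m (mem_Ici.mpr hm0) n (mem_Ici.mpr hn0) hmn x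
      have b1' : ‖evolOp T n m (x - Pp m x)‖ ≤ Mp * E * ‖x‖ := by
        refine b1.trans ?_
        have hexp : Real.exp (-βp * z) ≤ E := by
          rw [hEdef]
          apply Real.exp_le_exp.mpr
          nlinarith [mul_nonneg (sub_nonneg.mpr hβp) hz]
        exact mul_le_mul_of_nonneg_right (mul_le_mul_of_nonneg_left hexp hMp.le) hxnn
      have key : evolOp T n m (evolOp T m 0 (R (H m hm0 x))) = evolOp T n 0 (R (H m hm0 x)) :=
        evolOp_comp_apply T hm0 hmn _
      have hsz : Pp 0 (R (H m hm0 x)) = 0 := by rw [hRapp]; exact hQsub _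
      have b2 : ‖evolOp T n 0 (R (H m hm0 x))‖
          ≤ Mp * Real.exp (-βp * ((n - 0:ℤ):ℝ)) * ‖R (H m hm0 x)‖ := by
        have := hp.stable 0 self_mem_Ici n (mem_Ici.mpr hn0) hn0 (R (H m hm0 x))
        rwa [hsz, sub_zero] at this
      have bH : ‖R (H m hm0 x)‖ ≤ nR * (Mp * Real.exp (-βp * (m:ℝ)) * ‖x‖) :=
        (R.le_opNorm _).trans (mul_le_mul_of_nonneg_left (hHnorm m hm0 x) hnR)
      have hee : Real.exp (-βp * ((n - 0:ℤ):ℝ)) * Real.exp (-βp * (m:ℝ)) ≤ E := by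
        rw [← Real.exp_add, hEdef]
        apply Real.exp_le_exp.mpr
        have hc : ((n - 0:ℤ):ℝ) = (n:ℝ) := by push_cast; ring
        rw [hc, hzeq]
        nlinarith [mul_nonneg (sub_nonneg.mpr hβp) (sub_nonneg.mpr hmn'), mul_nonneg (add_nonneg hp.beta_pos.le hβpos.le) hmr]
      have b2' : ‖evolOp T n 0 (R (H m hm0 x))‖ ≤ (Mp*Mp*nR) * E * ‖x‖ := by
        calc ‖evolOp T n 0 (R (H m hm0 x))‖
            ≤ Mp * Real.exp (-βp * ((n - 0:ℤ):ℝ)) * ‖R (H m hm0 x)‖ := b2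
          _ ≤ Mp * Real.exp (-βp * ((n - 0:ℤ):ℝ)) * (nR * (Mp * Real.exp (-βp * (m:ℝ)) * ‖x‖)) :=
              mul_le_mul_of_nonneg_left bH (by positivity)
          _ = (Mp*Mp*nR) * (Real.exp (-βp * ((n - 0:ℤ):ℝ)) * Real.exp (-βp * (m:ℝ))) * ‖x‖ := by
              ring
          _ ≤ (Mp*Mp*nR) * E * ‖x‖ :=
              mul_le_mul_of_nonneg_right (mul_le_mul_of_nonneg_left hee t1) hxnn
      have hcoef : Mp + Mp*Mp*nR ≤ M := by rw [hMdef]; linarith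
      calc ‖evolOp T n m (x - P m x)‖
          = ‖evolOp T n m (x - Pp m x) + evolOp T n 0 (R (H m hm0 x))‖ := by
            rw [e1, map_add, key]
        _ ≤ ‖evolOp T n m (x - Pp m x)‖ + ‖evolOp T n 0 (R (H m hm0 x))‖ := norm_add_le _ _
        _ ≤ Mp * E * ‖x‖ + (Mp*Mp*nR) * E * ‖x‖ := add_le_add b1' b2'
        _ ≤ M * E * ‖x‖ := by linarith [mul_le_mul_of_nonneg_right hcoef (mul_nonneg hEpos.le hxnn)]
    · rcases le_or_gt 0 n with hn0 | hn0
      · -- case C : m ≤ 0 ≤ n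
        have hmr : (m:ℝ) ≤ 0 := by exact_mod_cast hm0.le
        have hnr : (0:ℝ) ≤ (n:ℝ) := by exact_mod_cast hn0
        have c2 : Pm 0 (evolOp T 0 m (Pm m x)) = evolOp T 0 m (Pm m x) :=
          himg m hm0.le _ (hm.proj_apply (mem_Iic.mpr hm0.le) x)
        have c3 : Q (evolOp T 0 m (Pm m x)) = evolOp T 0 m (Pm m x) := hQfix _ c2
        have e1 : evolOp T n m (x - P m x) = evolOp T n 0 (R (evolOp T 0 m x)) := by
          rw [← evolOp_comp_apply T hm0.le hn0 (x - P m x), map_sub (evolOp T 0 m),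
            hM2 m hm0.le, ← hRapp]
        have s2 : R (evolOp T 0 m x) = R (evolOp T 0 m (x - Pm m x)) := by
          rw [map_sub (evolOp T 0 m), map_sub R]
          rw [show R (evolOp T 0 m (Pm m x)) = 0 by rw [hRapp, c3, sub_self]]
          rw [sub_zero]
        have bs : ‖R (evolOp T 0 m x)‖ ≤ nR * (Mm * Real.exp (βm * (m:ℝ)) * ‖x‖) := by
          rw [s2]
          refine (R.le_opNorm _).trans (mul_le_mul_of_nonneg_left ?_ hnR)
          have := hm.stable m (mem_Iic.mpr hm0.le) 0 self_mem_Iic hm0.le x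
          rwa [show -βm * (((0:ℤ) - m : ℤ):ℝ) = βm * (m:ℝ) by push_cast; ring] at this
        have hsz : Pp 0 (R (evolOp T 0 m x)) = 0 := by rw [hRapp]; exact hQsub _
        have b2 : ‖evolOp T n 0 (R (evolOp T 0 m x))‖
            ≤ Mp * Real.exp (-βp * ((n - 0:ℤ):ℝ)) * ‖R (evolOp T 0 m x)‖ := by
          have := hp.stable 0 self_mem_Ici n (mem_Ici.mpr hn0) hn0 (R (evolOp T 0 m x))
          rwa [hsz, sub_zero] at this
        have hee : Real.exp (-βp * ((n - 0:ℤ):ℝ)) * Real.exp (βm * (m:ℝ)) ≤ E := by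
          rw [← Real.exp_add, hEdef]
          apply Real.exp_le_exp.mpr
          have hc : ((n - 0:ℤ):ℝ) = (n:ℝ) := by push_cast; ring
          rw [hc, hzeq]
          nlinarith [mul_nonneg (sub_nonneg.mpr hβp) hnr, mul_nonpos_of_nonneg_of_nonpos (sub_nonneg.mpr hβm) hmr]
        have hcoef : Mp*Mm*nR ≤ M := by rw [hMdef]; linarith
        rw [e1]
        calc ‖evolOp T n 0 (R (evolOp T 0 m x))‖
            ≤ Mp * Real.exp (-βp * ((n - 0:ℤ):ℝ)) * ‖R (evolOp T 0 m x)‖ := b2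
          _ ≤ Mp * Real.exp (-βp * ((n - 0:ℤ):ℝ)) * (nR * (Mm * Real.exp (βm * (m:ℝ)) * ‖x‖)) :=
              mul_le_mul_of_nonneg_left bs (by positivity)
          _ = (Mp*Mm*nR) * (Real.exp (-βp * ((n - 0:ℤ):ℝ)) * Real.exp (βm * (m:ℝ))) * ‖x‖ := by
              ring
          _ ≤ (Mp*Mm*nR) * E * ‖x‖ :=
              mul_le_mul_of_nonneg_right (mul_le_mul_of_nonneg_left hee t4) hxnn
          _ ≤ M * E * ‖x‖ :=
              mul_le_mul_of_nonneg_right (mul_le_mul_of_nonneg_right hcoef hEpos.le) hxnn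
      · -- case B : m ≤ n ≤ 0
        have hmr : (m:ℝ) ≤ 0 := by exact_mod_cast hm0.le
        have hnr : (n:ℝ) ≤ 0 := by exact_mod_cast hn0.le
        set d : X := Pm m x - P m x with hddef
        have f1 : Pm m d = d := by
          rw [hddef, map_sub, hm.proj_apply (mem_Iic.mpr hm0.le), hM1 m hm0.le]
        have c1 : Pm 0 (evolOp T 0 m x) = evolOp T 0 m (Pm m x) :=
          hm.commute_apply (mem_Iic.mpr hm0.le) self_mem_Iic hm0.le x
        have c2 : Pm 0 (evolOp T 0 m (Pm m x)) = evolOp T 0 m (Pm m x) :=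
          himg m hm0.le _ (hm.proj_apply (mem_Iic.mpr hm0.le) x)
        have c3 : Q (evolOp T 0 m (Pm m x)) = evolOp T 0 m (Pm m x) := hQfix _ c2
        have f2 : evolOp T 0 m d = D (evolOp T 0 m (x - Pm m x)) := by
          rw [hddef, map_sub (evolOp T 0 m), hM2 m hm0.le, map_sub (evolOp T 0 m), hDapp,
            map_sub (Pm 0), map_sub Q, c1, c2, c3]
          abel
        have f3 : ‖evolOp T 0 m (x - Pm m x)‖ ≤ Mm * Real.exp (βm * (m:ℝ)) * ‖x‖ := by
          have := hm.stable m (mem_Iic.mpr hm0.le) 0 self_mem_Iic hm0.le x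
          rwa [show -βm * (((0:ℤ) - m : ℤ):ℝ) = βm * (m:ℝ) by push_cast; ring] at this
        have f4 : ‖evolOp T 0 m d‖ ≤ nD * (Mm * Real.exp (βm * (m:ℝ)) * ‖x‖) := by
          rw [f2]
          exact (D.le_opNorm _).trans (mul_le_mul_of_nonneg_left f3 hnD)
        have f5 : Pm 0 (evolOp T 0 m d) = evolOp T 0 m d := himg m hm0.le d f1
        -- piece 1
        have b1 := hm.stable m (mem_Iic.mpr hm0.le) n (mem_Iic.mpr hn0.le) hmn x
        have b1' : ‖evolOp T n m (x - Pm m x)‖ ≤ Mm * E * ‖x‖ := by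
          refine b1.trans ?_
          have hexp : Real.exp (-βm * z) ≤ E := by
            rw [hEdef]
            apply Real.exp_le_exp.mpr
            nlinarith [mul_nonneg (sub_nonneg.mpr hβm) hz]
          exact mul_le_mul_of_nonneg_right (mul_le_mul_of_nonneg_left hexp hMm.le) hxnn
        -- piece 2
        have f7 : Pm n (evolOp T n m d) = evolOp T n m d := by
          rw [hm.commute_apply (mem_Iic.mpr hm0.le) (mem_Iic.mpr hn0.le) hmn, f1]
        have f8 : evolOp T 0 n (evolOp T n m d) = Pm 0 (evolOp T 0 m d) := by
          rw [evolOp_comp_apply T hmn hn0.le, f5]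
        have b2 : ‖evolOp T n m d‖
            ≤ Mm * Real.exp (-βm * (((0:ℤ) - n : ℤ):ℝ)) * ‖evolOp T 0 m d‖ :=
          hm.unstable n (mem_Iic.mpr hn0.le) 0 self_mem_Iic hn0.le (evolOp T 0 m d)
            (evolOp T n m d) ⟨evolOp T n m d, f7⟩ f8
        have hee : Real.exp (-βm * (((0:ℤ) - n : ℤ):ℝ)) * Real.exp (βm * (m:ℝ)) ≤ E := by
          rw [← Real.exp_add, hEdef]
          apply Real.exp_le_exp.mpr
          have hc : (((0:ℤ) - n : ℤ):ℝ) = -(n:ℝ) := by push_cast; ring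
          rw [hc, hzeq]
          nlinarith [mul_nonpos_of_nonneg_of_nonpos (add_nonneg hm.beta_pos.le hβpos.le) hnr, mul_nonpos_of_nonneg_of_nonpos (sub_nonneg.mpr hβm) hmr]
        have b2' : ‖evolOp T n m d‖ ≤ (Mm*Mm*nD) * E * ‖x‖ := by
          calc ‖evolOp T n m d‖
              ≤ Mm * Real.exp (-βm * (((0:ℤ) - n : ℤ):ℝ)) * ‖evolOp T 0 m d‖ := b2
            _ ≤ Mm * Real.exp (-βm * (((0:ℤ) - n : ℤ):ℝ))
                * (nD * (Mm * Real.exp (βm * (m:ℝ)) * ‖x‖)) :=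
                mul_le_mul_of_nonneg_left f4 (by positivity)
            _ = (Mm*Mm*nD) * (Real.exp (-βm * (((0:ℤ) - n : ℤ):ℝ))
                * Real.exp (βm * (m:ℝ))) * ‖x‖ := by ring
            _ ≤ (Mm*Mm*nD) * E * ‖x‖ :=
                mul_le_mul_of_nonneg_right (mul_le_mul_of_nonneg_left hee t2) hxnn
        have e1 : x - P m x = (x - Pm m x) + d := by rw [hddef]; abel
        calc ‖evolOp T n m (x - P m x)‖
            = ‖evolOp T n m (x - Pm m x) + evolOp T n m d‖ := by rw [e1, map_add]
          _ ≤ ‖evolOp T n m (x - Pm m x)‖ + ‖evolOp T n m d‖ := norm_add_le _ _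
          _ ≤ Mm * E * ‖x‖ + (Mm*Mm*nD) * E * ‖x‖ := add_le_add b1' b2'
          _ ≤ M * E * ‖x‖ := by
            have hcoef : Mm + Mm*Mm*nD ≤ M := by rw [hMdef]; linarith
            linarith [mul_le_mul_of_nonneg_right hcoef (mul_nonneg hEpos.le hxnn)]
  · -- unstable
    intro m _ n _ hmn x w hw hevol
    have hxnn : (0:ℝ) ≤ ‖x‖ := norm_nonneg x
    set z : ℝ := ((n - m : ℤ) : ℝ) with hzdef
    have hzeq : z = (n:ℝ) - (m:ℝ) := by rw [hzdef]; push_cast; ring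
    have hmn' : (m:ℝ) ≤ (n:ℝ) := by exact_mod_cast hmn
    have hz : 0 ≤ z := by rw [hzeq]; linarith
    set E : ℝ := Real.exp (-β * z) with hEdef
    have hEpos : 0 < E := Real.exp_pos _
    rcases le_or_gt 0 m with hm0 | hm0
    · -- case A : 0 ≤ m ≤ n
      have hn0 : 0 ≤ n := hm0.trans hmn
      have hmr : (0:ℝ) ≤ (m:ℝ) := by exact_mod_cast hm0
      have hnr : (0:ℝ) ≤ (n:ℝ) := by exact_mod_cast hn0
      rw [hrangeplus m hm0] at hw
      obtain ⟨u, hu', hweq⟩ := hw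
      have hu : Pm 0 u = u := hu'
      have hid : u = Q (H n hn0 x) := by
        refine hUinj n hn0 u _ hu (hQmem _) ?_
        rw [← evolOp_comp_apply T hm0 hmn u, hweq, hevol, hPplus n hn0]
      have hPpn : ‖Pp n x‖ ≤ Mp * ‖x‖ := by
        have := hp.unstable n (mem_Ici.mpr hn0) n (mem_Ici.mpr hn0) le_rfl x (Pp n x)
          ⟨x, rfl⟩ (evolOp_self_apply T n (Pp n x))
        simpa using this
      have hexpn : Real.exp (-βp * ((n - 0:ℤ):ℝ)) ≤ 1 := by
        rw [Real.exp_le_one_iff]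
        have hc : ((n - 0:ℤ):ℝ) = (n:ℝ) := by push_cast; ring
        rw [hc]
        nlinarith [mul_nonneg hp.beta_pos.le hnr]
      have hsz : Pp 0 (R (H n hn0 x)) = 0 := by rw [hRapp]; exact hQsub _
      have hRn : ‖evolOp T n 0 (R (H n hn0 x))‖ ≤ Mp*Mp*nR * ‖x‖ := by
        have hb : ‖evolOp T n 0 (R (H n hn0 x))‖
            ≤ Mp * Real.exp (-βp * ((n - 0:ℤ):ℝ)) * ‖R (H n hn0 x)‖ := by
          have := hp.stable 0 self_mem_Ici n (mem_Ici.mpr hn0) hn0 (R (H n hn0 x))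
          rwa [hsz, sub_zero] at this
        have hRH : ‖R (H n hn0 x)‖ ≤ nR * (Mp * ‖x‖) := by
          refine (R.le_opNorm _).trans (mul_le_mul_of_nonneg_left ?_ hnR)
          refine (hHnorm n hn0 x).trans ?_
          have h1 : Real.exp (-βp * (n:ℝ)) ≤ 1 := by
            rw [Real.exp_le_one_iff]; nlinarith [mul_nonneg hp.beta_pos.le hnr]
          linarith [mul_le_mul_of_nonneg_right (mul_le_mul_of_nonneg_left h1 hMp.le) hxnn]
        calc ‖evolOp T n 0 (R (H n hn0 x))‖
            ≤ Mp * Real.exp (-βp * ((n - 0:ℤ):ℝ)) * ‖R (H n hn0 x)‖ := hb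
          _ ≤ Mp * 1 * (nR * (Mp * ‖x‖)) := by
              refine mul_le_mul (mul_le_mul_of_nonneg_left hexpn hMp.le) hRH (norm_nonneg _) ?_
              positivity
          _ = Mp*Mp*nR * ‖x‖ := by ring
      have hPnx : ‖P n x‖ ≤ (Mp + Mp*Mp*nR) * ‖x‖ := by
        have e1 : P n x = Pp n x - evolOp T n 0 (R (H n hn0 x)) := by
          rw [hPplus n hn0, hRapp, map_sub, hH2 n hn0]
          abel
        rw [e1]
        calc ‖Pp n x - evolOp T n 0 (R (H n hn0 x))‖
            ≤ ‖Pp n x‖ + ‖evolOp T n 0 (R (H n hn0 x))‖ := norm_sub_le _ _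
          _ ≤ Mp * ‖x‖ + Mp*Mp*nR * ‖x‖ := add_le_add hPpn hRn
          _ = (Mp + Mp*Mp*nR) * ‖x‖ := by ring
      -- piece (i)
      have hi : ‖Pp m w‖ ≤ Mp * (Mp + Mp*Mp*nR) * E * ‖x‖ := by
        have harg : evolOp T n m (Pp m w) = Pp n (P n x) := by
          rw [← hp.commute_apply (mem_Ici.mpr hm0) (mem_Ici.mpr hn0) hmn w, hevol]
        have h1 := hp.unstable m (mem_Ici.mpr hm0) n (mem_Ici.mpr hn0) hmn (P n x) (Pp m w)
          ⟨w, rfl⟩ harg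
        have hexp : Real.exp (-βp * z) ≤ E := by
          rw [hEdef]
          apply Real.exp_le_exp.mpr
          nlinarith [mul_nonneg (sub_nonneg.mpr hβp) hz]
        calc ‖Pp m w‖ ≤ Mp * Real.exp (-βp * z) * ‖P n x‖ := h1
          _ ≤ Mp * Real.exp (-βp * z) * ((Mp + Mp*Mp*nR) * ‖x‖) :=
              mul_le_mul_of_nonneg_left hPnx (by positivity)
          _ = Mp * (Mp + Mp*Mp*nR) * Real.exp (-βp * z) * ‖x‖ := by ring
          _ ≤ Mp * (Mp + Mp*Mp*nR) * E * ‖x‖ := by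
              refine mul_le_mul_of_nonneg_right (mul_le_mul_of_nonneg_left hexp ?_) hxnn
              positivity
      -- piece (ii)
      have hii : ‖w - Pp m w‖ ≤ Mp*Mp*nQ * E * ‖x‖ := by
        have hw2 : w - Pp m w = evolOp T m 0 (u - Pp 0 u) := by
          rw [map_sub (evolOp T m 0), ← hp.commute_apply self_mem_Ici (mem_Ici.mpr hm0) hm0 u,
            hweq]
        have hb := hp.stable 0 self_mem_Ici m (mem_Ici.mpr hm0) hm0 u
        have hun : ‖u‖ ≤ nQ * (Mp * Real.exp (-βp * (n:ℝ)) * ‖x‖) := by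
          rw [hid]
          exact (Q.le_opNorm _).trans (mul_le_mul_of_nonneg_left (hHnorm n hn0 x) hnQ)
        have hee : Real.exp (-βp * ((m - 0:ℤ):ℝ)) * Real.exp (-βp * (n:ℝ)) ≤ E := by
          rw [← Real.exp_add, hEdef]
          apply Real.exp_le_exp.mpr
          have hc : ((m - 0:ℤ):ℝ) = (m:ℝ) := by push_cast; ring
          rw [hc, hzeq]
          nlinarith [mul_nonneg (sub_nonneg.mpr hβp) (sub_nonneg.mpr hmn'), mul_nonneg (add_nonneg hp.beta_pos.le hβpos.le) hmr]
        calc ‖w - Pp m w‖ = ‖evolOp T m 0 (u - Pp 0 u)‖ := by rw [hw2]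
          _ ≤ Mp * Real.exp (-βp * ((m - 0:ℤ):ℝ)) * ‖u‖ := hb
          _ ≤ Mp * Real.exp (-βp * ((m - 0:ℤ):ℝ))
              * (nQ * (Mp * Real.exp (-βp * (n:ℝ)) * ‖x‖)) :=
              mul_le_mul_of_nonneg_left hun (by positivity)
          _ = Mp*Mp*nQ * (Real.exp (-βp * ((m - 0:ℤ):ℝ)) * Real.exp (-βp * (n:ℝ))) * ‖x‖ := by
              ring
          _ ≤ Mp*Mp*nQ * E * ‖x‖ :=
              mul_le_mul_of_nonneg_right (mul_le_mul_of_nonneg_left hee t6) hxnn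
      have hcoef : Mp * (Mp + Mp*Mp*nR) + Mp*Mp*nQ ≤ M := by rw [hMdef]; linarith
      calc ‖w‖ = ‖Pp m w + (w - Pp m w)‖ := by rw [add_sub_cancel]
        _ ≤ ‖Pp m w‖ + ‖w - Pp m w‖ := norm_add_le _ _
        _ ≤ Mp * (Mp + Mp*Mp*nR) * E * ‖x‖ + Mp*Mp*nQ * E * ‖x‖ := add_le_add hi hii
        _ ≤ M * E * ‖x‖ := by linarith [mul_le_mul_of_nonneg_right hcoef (mul_nonneg hEpos.le hxnn)]
    · rcases le_or_gt 0 n with hn0 | hn0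
      · -- case C : m ≤ 0 ≤ n
        have hmr : (m:ℝ) ≤ 0 := by exact_mod_cast hm0.le
        have hnr : (0:ℝ) ≤ (n:ℝ) := by exact_mod_cast hn0
        rw [hrangeminus m hm0.le] at hw
        obtain ⟨hw1, hw2⟩ := hw
        have hu : Pm 0 (evolOp T 0 m w) = evolOp T 0 m w := himg m hm0.le w hw1
        have hid : evolOp T 0 m w = Q (H n hn0 x) := by
          refine hUinj n hn0 _ _ hu (hQmem _) ?_
          rw [evolOp_comp_apply T hm0.le hn0 w, hevol, hPplus n hn0]
        have hb := hm.unstable m (mem_Iic.mpr hm0.le) 0 self_mem_Iic hm0.le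
          (evolOp T 0 m w) w ⟨w, hw1⟩ hu.symm
        have hun : ‖evolOp T 0 m w‖ ≤ nQ * (Mp * Real.exp (-βp * (n:ℝ)) * ‖x‖) := by
          rw [hid]
          exact (Q.le_opNorm _).trans (mul_le_mul_of_nonneg_left (hHnorm n hn0 x) hnQ)
        have hee : Real.exp (-βm * (((0:ℤ) - m:ℤ):ℝ)) * Real.exp (-βp * (n:ℝ)) ≤ E := by
          rw [← Real.exp_add, hEdef]
          apply Real.exp_le_exp.mpr
          have hc : (((0:ℤ) - m:ℤ):ℝ) = -(m:ℝ) := by push_cast; ring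
          rw [hc, hzeq]
          nlinarith [mul_nonneg (sub_nonneg.mpr hβp) hnr, mul_nonpos_of_nonneg_of_nonpos (sub_nonneg.mpr hβm) hmr]
        have hcoef : Mm*Mp*nQ ≤ M := by rw [hMdef]; linarith
        calc ‖w‖ ≤ Mm * Real.exp (-βm * (((0:ℤ) - m:ℤ):ℝ)) * ‖evolOp T 0 m w‖ := hb
          _ ≤ Mm * Real.exp (-βm * (((0:ℤ) - m:ℤ):ℝ))
              * (nQ * (Mp * Real.exp (-βp * (n:ℝ)) * ‖x‖)) :=
              mul_le_mul_of_nonneg_left hun (by positivity)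
          _ = Mm*Mp*nQ * (Real.exp (-βm * (((0:ℤ) - m:ℤ):ℝ)) * Real.exp (-βp * (n:ℝ))) * ‖x‖ := by
              ring
          _ ≤ Mm*Mp*nQ * E * ‖x‖ := by
              refine mul_le_mul_of_nonneg_right (mul_le_mul_of_nonneg_left hee ?_) hxnn
              positivity
          _ ≤ M * E * ‖x‖ :=
              mul_le_mul_of_nonneg_right (mul_le_mul_of_nonneg_right hcoef hEpos.le) hxnn
      · -- case B : m ≤ n ≤ 0
        have hmr : (m:ℝ) ≤ 0 := by exact_mod_cast hm0.le
        have hnr : (n:ℝ) ≤ 0 := by exact_mod_cast hn0.le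
        rw [hrangeminus m hm0.le] at hw
        obtain ⟨hw1, hw2⟩ := hw
        set d : X := Pm n x - P n x with hddef
        have f1 : Pm n d = d := by
          rw [hddef, map_sub, hm.proj_apply (mem_Iic.mpr hn0.le), hM1 n hn0.le]
        have c1 : Pm 0 (evolOp T 0 n x) = evolOp T 0 n (Pm n x) :=
          hm.commute_apply (mem_Iic.mpr hn0.le) self_mem_Iic hn0.le x
        have c2 : Pm 0 (evolOp T 0 n (Pm n x)) = evolOp T 0 n (Pm n x) :=
          himg n hn0.le _ (hm.proj_apply (mem_Iic.mpr hn0.le) x)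
        have c3 : Q (evolOp T 0 n (Pm n x)) = evolOp T 0 n (Pm n x) := hQfix _ c2
        have f2 : evolOp T 0 n d = D (evolOp T 0 n (x - Pm n x)) := by
          rw [hddef, map_sub (evolOp T 0 n), hM2 n hn0.le, map_sub (evolOp T 0 n), hDapp,
            map_sub (Pm 0), map_sub Q, c1, c2, c3]
          abel
        have f3 : ‖evolOp T 0 n (x - Pm n x)‖ ≤ Mm * Real.exp (βm * (n:ℝ)) * ‖x‖ := by
          have := hm.stable n (mem_Iic.mpr hn0.le) 0 self_mem_Iic hn0.le x
          rwa [show -βm * (((0:ℤ) - n : ℤ):ℝ) = βm * (n:ℝ) by push_cast; ring] at this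
        have f4 : ‖evolOp T 0 n d‖ ≤ nD * (Mm * Real.exp (βm * (n:ℝ)) * ‖x‖) := by
          rw [f2]
          exact (D.le_opNorm _).trans (mul_le_mul_of_nonneg_left f3 hnD)
        have f5 : Pm 0 (evolOp T 0 n d) = evolOp T 0 n d := himg n hn0.le d f1
        -- w1 : preimage of Pm n x
        obtain ⟨w1, hw11, hw12⟩ := hm.exists_preimage (mem_Iic.mpr hm0.le)
          (mem_Iic.mpr hn0.le) hmn x
        have hbw1 : ‖w1‖ ≤ Mm * E * ‖x‖ := by
          have h1 := hm.unstable m (mem_Iic.mpr hm0.le) n (mem_Iic.mpr hn0.le) hmn x w1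
            ⟨w1, hw11⟩ hw12
          have hexp : Real.exp (-βm * z) ≤ E := by
            rw [hEdef]
            apply Real.exp_le_exp.mpr
            nlinarith [mul_nonneg (sub_nonneg.mpr hβm) hz]
          calc ‖w1‖ ≤ Mm * Real.exp (-βm * z) * ‖x‖ := h1
            _ ≤ Mm * E * ‖x‖ :=
                mul_le_mul_of_nonneg_right (mul_le_mul_of_nonneg_left hexp hMm.le) hxnn
        -- w2 := w - w1
        have hw21 : Pm m (w - w1) = w - w1 := by rw [map_sub, hw1, hw11]
        have hev2 : evolOp T n m (w - w1) = -d := by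
          rw [map_sub, hevol, hw12, hddef]
          abel
        have hevm : evolOp T 0 m (w - w1) = -(evolOp T 0 n d) := by
          rw [← evolOp_comp_apply T hmn hn0.le (w - w1), hev2, map_neg]
        have hum : Pm 0 (evolOp T 0 m (w - w1)) = evolOp T 0 m (w - w1) :=
          himg m hm0.le _ hw21
        have hbw2 : ‖w - w1‖ ≤ Mm*Mm*nD * E * ‖x‖ := by
          have h1 := hm.unstable m (mem_Iic.mpr hm0.le) 0 self_mem_Iic hm0.le
            (evolOp T 0 m (w - w1)) (w - w1) ⟨w - w1, hw21⟩ hum.symm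
          have h2 : ‖evolOp T 0 m (w - w1)‖ ≤ nD * (Mm * Real.exp (βm * (n:ℝ)) * ‖x‖) := by
            rw [hevm, norm_neg]
            exact f4
          have hee : Real.exp (-βm * (((0:ℤ) - m:ℤ):ℝ)) * Real.exp (βm * (n:ℝ)) ≤ E := by
            rw [← Real.exp_add, hEdef]
            apply Real.exp_le_exp.mpr
            have hc : (((0:ℤ) - m:ℤ):ℝ) = -(m:ℝ) := by push_cast; ring
            rw [hc, hzeq]
            nlinarith [mul_nonpos_of_nonneg_of_nonpos (add_nonneg hm.beta_pos.le hβpos.le) hnr, mul_nonpos_of_nonneg_of_nonpos (sub_nonneg.mpr hβm) hmr]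
          calc ‖w - w1‖ ≤ Mm * Real.exp (-βm * (((0:ℤ) - m:ℤ):ℝ)) * ‖evolOp T 0 m (w - w1)‖ :=
              h1
            _ ≤ Mm * Real.exp (-βm * (((0:ℤ) - m:ℤ):ℝ))
                * (nD * (Mm * Real.exp (βm * (n:ℝ)) * ‖x‖)) :=
                mul_le_mul_of_nonneg_left h2 (by positivity)
            _ = Mm*Mm*nD * (Real.exp (-βm * (((0:ℤ) - m:ℤ):ℝ)) * Real.exp (βm * (n:ℝ))) * ‖x‖ :=
                by ring
            _ ≤ Mm*Mm*nD * E * ‖x‖ :=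
                mul_le_mul_of_nonneg_right (mul_le_mul_of_nonneg_left hee t2) hxnn
        calc ‖w‖ = ‖w1 + (w - w1)‖ := by rw [add_sub_cancel]
          _ ≤ ‖w1‖ + ‖w - w1‖ := norm_add_le _ _
          _ ≤ Mm * E * ‖x‖ + Mm*Mm*nD * E * ‖x‖ := add_le_add hbw1 hbw2
          _ ≤ M * E * ‖x‖ := by
              have hcoef : Mm + Mm*Mm*nD ≤ M := by rw [hMdef]; linarith
              linarith [mul_le_mul_of_nonneg_right hcoef (mul_nonneg hEpos.le hxnn)]


end Aux2

/-- **Gluing of exponential dichotomies.**  The family `T(n+1,n)` admits an exponential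
dichotomy on `ℤ` if and only if its restrictions to `ℤ⁺` and `ℤ⁻` both admit exponential
dichotomies and `X = S₀ ⊕ U₀`.  Moreover, when the dichotomies on `ℤ⁺` and `ℤ⁻` have
finite ranks, the condition `X = S₀ ⊕ U₀` implies that the two ranks are equal. -/
theorem dichotomy_on_Z_iff_halfline_dichotomies (T : ℤ → X →L[ℝ] X) :
    ((∃ (β M : ℝ) (P : ℤ → X →L[ℝ] X), ExpDichotomyOn T Set.univ β M P) ↔
      ((∃ (β M : ℝ) (P : ℤ → X →L[ℝ] X), ExpDichotomyOn T (Set.Ici 0) β M P)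
        ∧ (∃ (β M : ℝ) (P : ℤ → X →L[ℝ] X), ExpDichotomyOn T (Set.Iic 0) β M P)
        ∧ DirectSumDecomp T))
    ∧ ∀ (βp Mp βm Mm : ℝ) (Pp Pm : ℤ → X →L[ℝ] X) (kp km : ℕ),
        ExpDichotomyOn T (Set.Ici 0) βp Mp Pp → DichotomyRankOn Pp (Set.Ici 0) kp →
        ExpDichotomyOn T (Set.Iic 0) βm Mm Pm → DichotomyRankOn Pm (Set.Iic 0) km →
        DirectSumDecomp T → kp = km := by
  constructor
  · constructor
    · rintro ⟨β, M, P, h⟩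
      exact ⟨⟨β, M, P, h.mono (Set.subset_univ _)⟩, ⟨β, M, P, h.mono (Set.subset_univ _)⟩,
        directSumDecomp_of_univ h⟩
    · rintro ⟨⟨βp, Mp, Pp, hp⟩, ⟨βm, Mm, Pm, hm⟩, hd⟩
      exact exists_univ_dichotomy hp hm hd
  · intro βp Mp βm Mm Pp Pm kp km hp hkp hm hkm hd
    exact rank_eq hp hm hd hkp hkm
end

section
/- (Convergence to a solution of the asymptotic equation.) Let X be a complex Banach space and T ∈ L(X). Suppose there are ρ > 0 and 0 < δ₁ < δ, 0 < δ̃₁ < δ̃ such that ∅ ≠ σ(T) ∩ {ρ − δ ≤ |z| ≤ ρ + δ̃} ⊆ {ρ − δ₁ < |z| < ρ + δ̃₁}, and suppose T (as a constant family) admits a shifted exponential dichotomy with gap [ρ + δ̃₁, ρ + δ*] for some δ* > δ̃. Let Q_{ρ−δ} and Q_{ρ+δ̃} be the Riesz spectral projections onto the spectral parts in {|z| < ρ − δ} and {|z| < ρ + δ̃} respectively, and set T_ρ = [Q_{ρ+δ̃} − Q_{ρ−δ}] T [Q_{ρ+δ̃} − Q_{ρ−δ}]. Let u(n), n ∈ ℤ⁺,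 satisfy u(n+1) = (T + Σ(n)) u(n) with ‖Σ(n)‖ = O(rⁿ) for some r < 1 with (ρ + δ̃) r < ρ − δ, and assume ρ − δ₁ ≤ lim_{n→+∞} ‖u(n)‖_X^{1/n} ≤ ρ + δ̃₁. Then there exists a nowhere-vanishing sequence u_∞(n), n ∈ ℤ⁺, with values in R(Q_{ρ+δ̃} − Q_{ρ−δ}), satisfying u_∞(n+1) = T_ρ u_∞(n) for all n, such that ‖u(n) − u_∞(n)‖_X = O((ρ − δ)ⁿ) as n → +∞. -/
open Set Filter

variable {X : Type*} [NormedAddCommGroup X] [NormedSpace ℂ X] [CompleteSpace X]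

/-- `P` is the Riesz spectral projection of `T` associated with the partition of
`σ(T)` into `σ(T) ∩ {|z| > ρ}` and `σ(T) ∩ {|z| < ρ}`. -/
def IsRieszProjection (T P : X →L[ℂ] X) (ρ : ℝ) : Prop :=
  P.comp P = P ∧ P.comp T = T.comp P ∧
  (∃ T' : ↥(LinearMap.range (P : X →ₗ[ℂ] X)) →L[ℂ] ↥(LinearMap.range (P : X →ₗ[ℂ] X)),
      (∀ x : ↥(LinearMap.range (P : X →ₗ[ℂ] X)), (T' x : X) = T (x : X)) ∧
      spectrum ℂ T' = {z ∈ spectrum ℂ T | ρ < ‖z‖}) ∧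
  (∃ T'' : ↥(LinearMap.range ((ContinuousLinearMap.id ℂ X - P : X →L[ℂ] X) : X →ₗ[ℂ] X)) →L[ℂ]
      ↥(LinearMap.range ((ContinuousLinearMap.id ℂ X - P : X →L[ℂ] X) : X →ₗ[ℂ] X)),
      (∀ x : ↥(LinearMap.range ((ContinuousLinearMap.id ℂ X - P : X →L[ℂ] X) : X →ₗ[ℂ] X)), (T'' x : X) = T (x : X)) ∧
      spectrum ℂ T'' = {z ∈ spectrum ℂ T | ‖z‖ < ρ})

/-- A constant family `T` admits a shifted exponential dichotomy with gap `[l₁,l₂]`,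
bound `K` and projection `P` (`Q = I − P`): `P` commutes with `T`, `T` restricted to
`R(P)` is an isomorphism of `R(P)`, `‖Tⁿ(I − P)‖ ≤ K l₁ⁿ` for `n ≥ 0` and
`‖Tⁿ P‖ ≤ K l₂ⁿ` for `n ≤ 0` (via the inverse on `R(P)`). -/
def ConstShiftedDichotomy (T : X →L[ℂ] X) (l₁ l₂ K : ℝ) (P : X →L[ℂ] X) : Prop :=
  0 < l₁ ∧ l₁ ≤ l₂ ∧ 0 < K ∧
  P.comp P = P ∧ P.comp T = T.comp P ∧
  (⇑T '' Set.range P = Set.range P) ∧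
  (∀ (n : ℕ) (x : X), ‖(T ^ n) (x - P x)‖ ≤ K * l₁ ^ n * ‖x‖) ∧
  (∀ (n : ℕ) (x w : X), w ∈ Set.range P → (T ^ n) w = P x →
    ‖w‖ ≤ K * l₂ ^ (-(n : ℤ)) * ‖x‖)


section Helpers

/-- Absorb finitely many initial exceptions into a constant. -/
lemma ev_to_global (f g : ℕ → ℝ) (hf : ∀ n, 0 ≤ f n) (hg : ∀ n, 0 < g n)
    (h : ∀ᶠ n in atTop, f n ≤ g n) : ∃ C : ℝ, 0 < C ∧ ∀ n, f n ≤ C * g n := by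
  obtain ⟨N, hN⟩ := eventually_atTop.mp h
  refine ⟨1 + ∑ k ∈ Finset.range N, f k / g k, ?_, ?_⟩
  · have : 0 ≤ ∑ k ∈ Finset.range N, f k / g k :=
      Finset.sum_nonneg fun k _ => div_nonneg (hf k) (hg k).le
    linarith
  · intro n
    rcases le_or_gt N n with hn | hn
    · have h1 : f n ≤ g n := hN n hn
      have h2 : (1:ℝ) ≤ 1 + ∑ k ∈ Finset.range N, f k / g k := by
        have : 0 ≤ ∑ k ∈ Finset.range N, f k / g k :=
          Finset.sum_nonneg fun k _ => div_nonneg (hf k) (hg k).le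
        linarith
      calc f n ≤ g n := h1
        _ = 1 * g n := (one_mul _).symm
        _ ≤ (1 + ∑ k ∈ Finset.range N, f k / g k) * g n :=
          mul_le_mul_of_nonneg_right h2 (hg n).le
    · have hmem : n ∈ Finset.range N := Finset.mem_range.mpr hn
      have h1 : f n / g n ≤ ∑ k ∈ Finset.range N, f k / g k :=
        Finset.single_le_sum (fun k _ => div_nonneg (hf k) (hg k).le) hmem
      have h2 : f n = f n / g n * g n := (div_mul_cancel₀ _ (hg n).ne').symm
      rw [h2]
      have : f n / g n ≤ 1 + ∑ k ∈ Finset.range N, f k / g k := by linarith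
      exact mul_le_mul_of_nonneg_right this (hg n).le

variable {A : Type*} [NormedRing A] [NormedAlgebra ℂ A] [CompleteSpace A]

/-- If all spectral values have norm `< c`, powers decay like `c'^n` for some `c' < c`. -/
lemma pow_bound_of_spectrum_lt (a : A) {c : ℝ} (hc : 0 < c)
    (h : ∀ z ∈ spectrum ℂ a, ‖z‖ < c) :
    ∃ c' C : ℝ, 0 < c' ∧ c' < c ∧ 0 < C ∧ ∀ n, ‖a ^ n‖ ≤ C * c' ^ n := by
  -- find c' with spectralRadius < ofReal c' and c' < c
  obtain ⟨c', hc'0, hc'c, hrad⟩ :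
      ∃ c' : ℝ, 0 < c' ∧ c' < c ∧ spectralRadius ℂ a < ENNReal.ofReal c' := by
    rcases (spectrum ℂ a).eq_empty_or_nonempty with he | hne
    · refine ⟨c / 2, by linarith, by linarith, ?_⟩
      have : spectralRadius ℂ a = 0 := by
        unfold spectralRadius
        rw [he]
        simp
      rw [this]
      exact ENNReal.ofReal_pos.mpr (by linarith : (0:ℝ) < c / 2)
    · obtain ⟨z₀, hz₀mem, hz₀max⟩ :=
        (spectrum.isCompact a).exists_isMaxOn hne (continuous_norm.continuousOn)
      refine ⟨(‖z₀‖ + c) / 2, by positivity, by have := h z₀ hz₀mem; linarith, ?_⟩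
      have hle : spectralRadius ℂ a ≤ ↑‖z₀‖₊ := by
        rw [spectralRadius]
        exact iSup₂_le fun z hz => by
          exact_mod_cast ENNReal.coe_le_coe.mpr (by exact_mod_cast hz₀max hz)
      refine lt_of_le_of_lt hle ?_
      rw [← ENNReal.ofReal_coe_nnreal]
      refine ENNReal.ofReal_lt_ofReal_iff_of_nonneg (norm_nonneg _) |>.mpr ?_
      have := h z₀ hz₀mem
      linarith
  -- Gelfand: eventually ‖a^n‖ ≤ c'^n
  have hgel := spectrum.pow_nnnorm_pow_one_div_tendsto_nhds_spectralRadius a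
  have hev : ∀ᶠ n : ℕ in atTop,
      ((‖a ^ n‖₊ : ENNReal) ^ (1 / (n:ℝ))) < ENNReal.ofReal c' :=
    hgel.eventually_lt_const hrad
  have hev2 : ∀ᶠ n : ℕ in atTop, ‖a ^ n‖ ≤ c' ^ n := by
    filter_upwards [hev, eventually_ge_atTop 1] with n hn hn1
    have hne : (1 / (n:ℝ)) ≠ 0 := by
      have : (0:ℝ) < n := by exact_mod_cast hn1
      positivity
    have hpow : ((‖a ^ n‖₊ : ENNReal) ^ (1 / (n:ℝ))) ^ (n:ℝ)
        ≤ (ENNReal.ofReal c') ^ (n:ℝ) := by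
      exact ENNReal.rpow_le_rpow hn.le (by positivity)
    rw [← ENNReal.rpow_mul] at hpow
    have hmul : (1 / (n:ℝ)) * (n:ℝ) = 1 := by
      field_simp
    rw [hmul, ENNReal.rpow_one] at hpow
    have : (‖a ^ n‖₊ : ENNReal) ≤ ENNReal.ofReal (c' ^ n) := by
      calc (‖a ^ n‖₊ : ENNReal) ≤ ENNReal.ofReal c' ^ ((n:ℕ):ℝ) := hpow
        _ = ENNReal.ofReal (c' ^ ((n:ℕ):ℝ)) := (ENNReal.ofReal_rpow_of_pos hc'0)
        _ = ENNReal.ofReal (c' ^ n) := by rw [Real.rpow_natCast]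
    have h2 := ENNReal.toReal_mono (by simp) this
    simpa [ENNReal.toReal_ofReal (by positivity : (0:ℝ) ≤ c' ^ n)] using h2
  obtain ⟨C, hC, hCb⟩ := ev_to_global (fun n => ‖a ^ n‖) (fun n => c' ^ n)
    (fun n => norm_nonneg _) (fun n => by positivity) hev2
  exact ⟨c', C, hc'0, hc'c, hC, hCb⟩

/-- If all spectral values have norm `> b > 0`, then `a` is invertible and inverse powers
decay like `b'⁻¹^n` for some `b' > b`. -/
lemma inv_pow_bound_of_spectrum_gt (a : A) {b : ℝ} (hb : 0 < b)
    (h : ∀ z ∈ spectrum ℂ a, b < ‖z‖) :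
    ∃ (v : Aˣ) (b' C : ℝ), (v : A) = a ∧ b < b' ∧ 0 < C ∧
      ∀ n, ‖((v⁻¹ : Aˣ) : A) ^ n‖ ≤ C * (b'⁻¹) ^ n := by
  have hunit : IsUnit a := by
    by_contra hnu
    have h0 : (0:ℂ) ∈ spectrum ℂ a := (spectrum.zero_mem_iff ℂ).mpr hnu
    have := h 0 h0
    simp at this
    linarith
  obtain ⟨v, hv⟩ := hunit
  have hspec : ∀ z ∈ spectrum ℂ (((v⁻¹ : Aˣ) : A)), ‖z‖ < b⁻¹ := by
    intro z hz
    have hz0 : z ≠ 0 := by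
      intro h0
      rw [h0] at hz
      exact spectrum.zero_notMem ℂ (v⁻¹ : Aˣ).isUnit hz
    have : (((Units.mk0 z hz0)⁻¹ : ℂˣ) : ℂ) ∈ spectrum ℂ ((v : A)) := by
      rw [spectrum.inv_mem_iff]
      simpa using hz
    rw [hv] at this
    have hb' := h _ this
    simp only [Units.val_inv_eq_inv_val, Units.val_mk0, norm_inv] at hb'
    have hzpos : 0 < ‖z‖ := norm_pos_iff.mpr hz0
    rw [lt_inv_comm₀ hb hzpos] at hb'
    exact hb'
  obtain ⟨c', C, hc'0, hc'b, hC, hCb⟩ := pow_bound_of_spectrum_lt ((v⁻¹ : Aˣ) : A)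
    (by positivity : (0:ℝ) < b⁻¹) hspec
  refine ⟨v, c'⁻¹, C, hv, ?_, hC, ?_⟩
  · rw [lt_inv_comm₀ hc'0 hb] at hc'b
    exact hc'b
  · intro n
    rw [inv_inv]
    exact hCb n

end Helpers

section Plumbing

variable {X : Type*} [NormedAddCommGroup X] [NormedSpace ℂ X] [CompleteSpace X]

lemma proj_mem_range_iff {P : X →L[ℂ] X} (h : P.comp P = P) {x : X} :
    x ∈ LinearMap.range (P : X →ₗ[ℂ] X) ↔ P x = x := by
  constructor
  · rintro ⟨y, rfl⟩
    have := DFunLike.congr_fun h y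
    simpa using this
  · intro hx
    exact ⟨x, hx⟩

lemma proj_range_isClosed {P : X →L[ℂ] X} (h : P.comp P = P) :
    IsClosed ((LinearMap.range (P : X →ₗ[ℂ] X) : Submodule ℂ X) : Set X) := by
  have : ((LinearMap.range (P : X →ₗ[ℂ] X) : Submodule ℂ X) : Set X) = {x | P x = x} := by
    ext x
    simpa using proj_mem_range_iff h (x := x)
  rw [this]
  exact isClosed_eq P.continuous continuous_id

lemma restr_pow_coe {p : Submodule ℂ X} (T : X →L[ℂ] X) (E : ↥p →L[ℂ] ↥p)
    (hc : ∀ x : ↥p, ((E x : X)) = T (x : X)) :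
    ∀ (n : ℕ) (x : ↥p), (((E ^ n) x : X)) = (T ^ n) (x : X) := by
  intro n
  induction n with
  | zero => intro x; simp
  | succ n ih =>
    intro x
    simp only [pow_succ, ContinuousLinearMap.mul_apply]
    rw [ih, hc]

lemma eq_zero_of_norm_le_geom {v : X} {c q : ℝ} (hq0 : 0 ≤ q) (hq : q < 1)
    (h : ∀ n : ℕ, ‖v‖ ≤ c * q ^ n) : v = 0 := by
  have h0 : Tendsto (fun n : ℕ => c * q ^ n) atTop (nhds 0) := by
    have := tendsto_pow_atTop_nhds_zero_of_lt_one hq0 hq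
    simpa using this.const_mul c
  have : ‖v‖ ≤ 0 := ge_of_tendsto' h0 fun n => h n
  simpa using le_antisymm this (norm_nonneg v)

end Plumbing

section Series

open Filter ContinuousLinearMap

variable {X : Type*} [NormedAddCommGroup X] [NormedSpace ℂ X] [CompleteSpace X]

set_option maxHeartbeats 1000000 in
/-- Construction of the backward tail series `s n = ∑_{k ≥ n} T^{n-1-k} g k` inside an
invariant subspace on which `T` restricts to an invertible operator with controlled
inverse powers. -/
lemma tail_series (T : X →L[ℂ] X) (p : Submodule ℂ X) [CompleteSpace ↥p]
    (v : (↥p →L[ℂ] ↥p)ˣ)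
    (hvcoe : ∀ ξ : ↥p, ((((v : _ˣ) : ↥p →L[ℂ] ↥p) ξ : ↥p) : X) = T (ξ : X))
    (b C : ℝ) (hb : 0 < b) (hC : 0 < C)
    (hCb : ∀ m : ℕ, ‖(((v⁻¹ : _ˣ) : ↥p →L[ℂ] ↥p)) ^ m‖ ≤ C * b⁻¹ ^ m)
    (g : ℕ → X) (hg : ∀ k, g k ∈ p) (Cg η : ℝ) (hη : 0 < η) (hηb : η < b)
    (hgb : ∀ k, ‖g k‖ ≤ Cg * η ^ k)
    (W : X →L[ℂ] X) (hWg : ∀ k, W (g k) = 0)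
    (hWinv : ∀ ξ : ↥p, W ((ξ : X)) = 0 →
      W (((((v⁻¹ : _ˣ) : ↥p →L[ℂ] ↥p)) ξ : ↥p) : X) = 0) :
    ∃ s : ℕ → ↥p,
      (∀ n, ‖((s n : ↥p) : X)‖ ≤ (C * b⁻¹ * Cg * (1 - η / b)⁻¹) * η ^ n) ∧
      (∀ n, T ((s n : ↥p) : X) = g n + ((s (n + 1) : ↥p) : X)) ∧
      (∀ n, W ((s n : ↥p) : X) = 0) := by
  have hCg0 : 0 ≤ Cg := by
    have := le_trans (norm_nonneg (g 0)) (hgb 0)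
    simpa using this
  have hq0 : 0 ≤ η / b := by positivity
  have hq1 : η / b < 1 := (div_lt_one hb).mpr hηb
  set B : ↥p →L[ℂ] ↥p := ((v⁻¹ : _ˣ) : ↥p →L[ℂ] ↥p) with hBdef
  set A : ↥p →L[ℂ] ↥p := ((v : _ˣ) : ↥p →L[ℂ] ↥p) with hAdef
  set term : ℕ → ℕ → ↥p := fun n j => (B ^ (j + 1)) ⟨g (n + j), hg _⟩ with htermdef
  have htermb : ∀ n j, ‖term n j‖ ≤ (C * b⁻¹ * Cg * η ^ n) * (η / b) ^ j := by
    intro n j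
    calc ‖term n j‖ ≤ ‖B ^ (j + 1)‖ * ‖(⟨g (n + j), hg _⟩ : ↥p)‖ := le_opNorm _ _
      _ ≤ (C * b⁻¹ ^ (j + 1)) * (Cg * η ^ (n + j)) := by
          apply mul_le_mul (hCb (j+1)) _ (norm_nonneg _) (by positivity)
          rw [Submodule.coe_norm]
          exact hgb (n + j)
      _ = (C * b⁻¹ * Cg * η ^ n) * (η / b) ^ j := by
          rw [pow_succ, pow_add, div_pow, div_eq_mul_inv, ← inv_pow]
          ring
  have hgeo : ∀ n : ℕ, Summable (fun j : ℕ => (C * b⁻¹ * Cg * η ^ n) * (η / b) ^ j) :=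
    fun n => (summable_geometric_of_lt_one hq0 hq1).mul_left _
  have hsum : ∀ n, Summable (term n) := fun n =>
    Summable.of_norm_bounded (hgeo n) (htermb n)
  set s : ℕ → ↥p := fun n => ∑' j, term n j with hsdef
  have hWterm : ∀ n j, W ((term n j : ↥p) : X) = 0 := by
    have key : ∀ (m : ℕ) (k : ℕ), W (((B ^ m) ⟨g k, hg k⟩ : ↥p) : X) = 0 := by
      intro m
      induction m with
      | zero => intro k; simpa using hWg k
      | succ m ih =>
        intro k
        have : (B ^ (m+1)) ⟨g k, hg k⟩ = B ((B ^ m) ⟨g k, hg k⟩) := by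
          rw [pow_succ']
          rfl
        rw [this]
        exact hWinv _ (ih k)
    intro n j
    exact key (j+1) (n+j)
  have hnorm : ∀ n, ‖((s n : ↥p) : X)‖ ≤ (C * b⁻¹ * Cg * (1 - η / b)⁻¹) * η ^ n := by
    intro n
    rw [← Submodule.coe_norm]
    have h1 : ‖s n‖ ≤ ∑' j, ‖term n j‖ :=
      norm_tsum_le_tsum_norm ((hgeo n).of_nonneg_of_le (fun j => norm_nonneg _) (htermb n))
    refine h1.trans ?_
    have h2 : ∑' j, ‖term n j‖ ≤ ∑' j, (C * b⁻¹ * Cg * η ^ n) * (η / b) ^ j :=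
      Summable.tsum_le_tsum (htermb n)
        ((hgeo n).of_nonneg_of_le (fun j => norm_nonneg _) (htermb n)) (hgeo n)
    refine h2.trans ?_
    rw [tsum_mul_left, tsum_geometric_of_lt_one hq0 hq1]
    ring_nf
    exact le_refl _
  have hrec : ∀ n, T ((s n : ↥p) : X) = g n + ((s (n + 1) : ↥p) : X) := by
    intro n
    set f : ℕ → ↥p := fun j => (B ^ j) ⟨g (n + j), hg _⟩ with hfdef
    have hfb : ∀ j, ‖f j‖ ≤ (C * Cg * η ^ n) * (η / b) ^ j := by
      intro j
      calc ‖f j‖ ≤ ‖B ^ j‖ * ‖(⟨g (n + j), hg _⟩ : ↥p)‖ := le_opNorm _ _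
        _ ≤ (C * b⁻¹ ^ j) * (Cg * η ^ (n + j)) := by
            apply mul_le_mul (hCb j) _ (norm_nonneg _) (by positivity)
            rw [Submodule.coe_norm]
            exact hgb (n + j)
        _ = (C * Cg * η ^ n) * (η / b) ^ j := by
            rw [pow_add, div_pow, div_eq_mul_inv, ← inv_pow]
            ring
    have hfsum : Summable f :=
      Summable.of_norm_bounded ((summable_geometric_of_lt_one hq0 hq1).mul_left _) hfb
    have hAterm : ∀ j, A (term n j) = f j := by
      intro j
      have h1 : A * (B ^ (j + 1)) = B ^ j := by
        rw [hAdef, hBdef, ← Units.val_pow_eq_pow_val, ← Units.val_mul,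
          ← Units.val_pow_eq_pow_val]
        congr 1
        rw [pow_succ']
        rw [← mul_assoc, mul_inv_cancel, one_mul]
      calc A (term n j) = (A * (B ^ (j + 1))) ⟨g (n + j), hg _⟩ := rfl
        _ = (B ^ j) ⟨g (n + j), hg _⟩ := by rw [h1]
        _ = f j := rfl
    have hAs : A (s n) = ∑' j, f j := by
      rw [hsdef]
      rw [A.map_tsum (hsum n)]
      exact tsum_congr hAterm
    have hsplit : ∑' j, f j = f 0 + ∑' j, f (j + 1) := Summable.tsum_eq_zero_add hfsum
    have hf0 : f 0 = ⟨g n, hg n⟩ := by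
      simp only [hfdef, pow_zero, ContinuousLinearMap.one_apply]
      exact Subtype.ext (congrArg g (Nat.add_zero n))
    have hfshift : ∀ j, f (j + 1) = term (n + 1) j := by
      intro j
      simp only [hfdef, htermdef]
      congr 1
      exact Subtype.ext (congrArg g (by omega : n + (j + 1) = (n + 1) + j))
    have htail : ∑' j, f (j + 1) = s (n + 1) := by
      rw [hsdef]
      exact tsum_congr hfshift
    have hTcoe : T ((s n : ↥p) : X) = ((A (s n) : ↥p) : X) := (hvcoe (s n)).symm
    rw [hTcoe, hAs, hsplit, hf0, htail]
    push_cast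
    rfl
  have hW : ∀ n, W ((s n : ↥p) : X) = 0 := by
    intro n
    have h1 : ((s n : ↥p) : X) = p.subtypeL (s n) := rfl
    rw [h1, hsdef]
    rw [← ContinuousLinearMap.comp_apply, (W.comp p.subtypeL).map_tsum (hsum n)]
    · have : ∀ j, (W.comp p.subtypeL) (term n j) = 0 := fun j => hWterm n j
      rw [tsum_congr this]
      exact tsum_zero
  exact ⟨s, hnorm, hrec, hW⟩

end Series
section Main

open ContinuousLinearMap

variable {X : Type*} [NormedAddCommGroup X] [NormedSpace ℂ X] [CompleteSpace X]

set_option maxHeartbeats 3000000 in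
theorem convergence_to_asymptotic_equation'
    (T : X →L[ℂ] X) (ρ d₁ d dt₁ dt : ℝ)
    (hρ : 0 < ρ) (hd₁ : 0 < d₁) (hd : d₁ < d) (hdt₁ : 0 < dt₁) (hdt : dt₁ < dt)
    (Pd Pdt : X →L[ℂ] X)
    (hPd : IsRieszProjection T Pd (ρ - d))
    (hPdt : IsRieszProjection T Pdt (ρ + dt))
    (Sig : ℕ → X →L[ℂ] X) (r : ℝ) (hr : 0 < r)
    (hrsmall : (ρ + dt) * r < ρ - d)
    (hSig : ∃ C : ℝ, ∀ n : ℕ, ‖Sig n‖ ≤ C * r ^ n)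
    (u : ℕ → X)
    (hu : ∀ n : ℕ, u (n + 1) = (T + Sig n) (u n))
    (hlim : ∃ L : ℝ, Filter.Tendsto (fun n : ℕ => ‖u n‖ ^ ((n : ℝ))⁻¹) Filter.atTop (nhds L)
      ∧ ρ - d₁ ≤ L ∧ L ≤ ρ + dt₁) :
    ∃ uinf : ℕ → X,
      (∀ n, uinf n ≠ 0)
      ∧ (∀ n, uinf n ∈ Set.range (Pd - Pdt))
      ∧ (∀ n, uinf (n + 1) = ((Pd - Pdt).comp (T.comp (Pd - Pdt))) (uinf n))
      ∧ ∃ C' : ℝ, ∀ n : ℕ, ‖u n - uinf n‖ ≤ C' * (ρ - d) ^ n := by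
  set β : ℝ := ρ - d with hβdef
  set pd := LinearMap.range (Pd : X →ₗ[ℂ] X) with hpddef
  set pt := LinearMap.range (Pdt : X →ₗ[ℂ] X) with hptdef
  set qd := LinearMap.range ((ContinuousLinearMap.id ℂ X - Pd : X →L[ℂ] X) : X →ₗ[ℂ] X) with hqddef
  obtain ⟨hPd2, hPdT, ⟨Td, hTdc, hTdσ⟩, ⟨Sd, hSdc, hSdσ⟩⟩ := hPd
  obtain ⟨hPt2, hPtT, ⟨Tt, hTtc, hTtσ⟩, -⟩ := hPdt
  have hdpos : 0 < dt := hdt₁.trans hdt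
  have hβ : 0 < β := lt_trans (by positivity) hrsmall
  have hβdt : β < ρ + dt := by simp only [hβdef]; linarith
  -- complete space instances
  have hqd2 : (ContinuousLinearMap.id ℂ X - Pd).comp (ContinuousLinearMap.id ℂ X - Pd)
      = ContinuousLinearMap.id ℂ X - Pd := by
    ext x
    have := DFunLike.congr_fun hPd2 x
    simp only [comp_apply] at this ⊢
    simp only [sub_apply, coe_id', id_eq, map_sub, this]
    abel
  haveI iPd : CompleteSpace ↥pd :=
    (proj_range_isClosed hPd2).completeSpace_coe
  haveI iPt : CompleteSpace ↥pt :=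
    (proj_range_isClosed hPt2).completeSpace_coe
  haveI iQd : CompleteSpace ↥qd :=
    (proj_range_isClosed hqd2).completeSpace_coe
  -- spectral bounds
  obtain ⟨θ, Cf, hθ0, hθβ, hCf, hCfb⟩ : ∃ θ Cf : ℝ, 0 < θ ∧ θ < β ∧ 0 < Cf ∧
      ∀ n, ‖Sd ^ n‖ ≤ Cf * θ ^ n := by
    refine pow_bound_of_spectrum_lt Sd hβ ?_
    intro z hz
    rw [hSdσ] at hz
    exact hz.2
  obtain ⟨vd, ν, Cd, hvd, hνβ, hCd, hCdb⟩ := inv_pow_bound_of_spectrum_gt Td hβ (by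
    intro z hz
    rw [hTdσ] at hz
    exact hz.2)
  obtain ⟨vt, μ, Ct, hvt, hμ, hCt, hCtb⟩ := inv_pow_bound_of_spectrum_gt Tt
    (show (0:ℝ) < ρ + dt by linarith) (by
    intro z hz
    rw [hTtσ] at hz
    exact hz.2)
  -- X-level dynamical estimates
  have memqd : ∀ x : X, x - Pd x ∈ qd := fun x => ⟨x, by simp [sub_apply]⟩
  have hPdp : ∀ x, Pd (Pd x) = Pd x := fun x => by
    have := DFunLike.congr_fun hPd2 x; simpa using this
  have hPtp : ∀ x, Pdt (Pdt x) = Pdt x := fun x => by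
    have := DFunLike.congr_fun hPt2 x; simpa using this
  have hTPd : ∀ x, Pd (T x) = T (Pd x) := fun x => by
    have := DFunLike.congr_fun hPdT x; simpa using this
  have hTPt : ∀ x, Pdt (T x) = T (Pdt x) := fun x => by
    have := DFunLike.congr_fun hPtT x; simpa using this
  have hTPdn : ∀ (n : ℕ) (x : X), Pd ((T ^ n) x) = (T ^ n) (Pd x) := by
    intro n
    induction n with
    | zero => intro x; simp
    | succ n ih =>
      intro x
      simp only [pow_succ, ContinuousLinearMap.mul_apply]
      rw [ih (T x), hTPd]
  have hTPtn : ∀ (n : ℕ) (x : X), Pdt ((T ^ n) x) = (T ^ n) (Pdt x) := by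
    intro n
    induction n with
    | zero => intro x; simp
    | succ n ih =>
      intro x
      simp only [pow_succ, ContinuousLinearMap.mul_apply]
      rw [ih (T x), hTPt]
  -- F1 : forward decay on range (1 - Pd)
  have F1 : ∀ (n : ℕ) (x : X), ‖(T ^ n) (x - Pd x)‖ ≤ Cf * θ ^ n * ‖x - Pd x‖ := by
    intro n x
    have h1 : (((Sd ^ n) ⟨x - Pd x, memqd x⟩ : ↥qd) : X) = (T ^ n) (x - Pd x) :=
      restr_pow_coe T Sd hSdc n ⟨x - Pd x, memqd x⟩
    calc ‖(T ^ n) (x - Pd x)‖ = ‖(Sd ^ n) (⟨x - Pd x, memqd x⟩ : ↥qd)‖ := by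
          rw [Submodule.coe_norm, h1]
      _ ≤ ‖Sd ^ n‖ * ‖(⟨x - Pd x, memqd x⟩ : ↥qd)‖ := (Sd ^ n).le_opNorm _
      _ ≤ (Cf * θ ^ n) * ‖x - Pd x‖ :=
          mul_le_mul_of_nonneg_right (hCfb n) (norm_nonneg _)
      _ = Cf * θ ^ n * ‖x - Pd x‖ := by ring
  -- backward estimates
  have Bd_cancel : ∀ (n : ℕ), (((vd⁻¹ : _ˣ) : ↥pd →L[ℂ] ↥pd) ^ n) * (((vd : _ˣ) : ↥pd →L[ℂ] ↥pd) ^ n) = 1 := by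
    intro n
    rw [← Units.val_pow_eq_pow_val, ← Units.val_pow_eq_pow_val, ← Units.val_mul,
      inv_pow, inv_mul_cancel, Units.val_one]
  have Bt_cancel : ∀ (n : ℕ), (((vt⁻¹ : _ˣ) : ↥pt →L[ℂ] ↥pt) ^ n) * (((vt : _ˣ) : ↥pt →L[ℂ] ↥pt) ^ n) = 1 := by
    intro n
    rw [← Units.val_pow_eq_pow_val, ← Units.val_pow_eq_pow_val, ← Units.val_mul,
      inv_pow, inv_mul_cancel, Units.val_one]
  have hvd_coe : ∀ ξ : ↥pd, (((vd : _ˣ) : ↥pd →L[ℂ] ↥pd) ξ : X) = T (ξ : X) := by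
    intro ξ; rw [hvd]; exact hTdc ξ
  have hvt_coe : ∀ ξ : ↥pt, (((vt : _ˣ) : ↥pt →L[ℂ] ↥pt) ξ : X) = T (ξ : X) := by
    intro ξ; rw [hvt]; exact hTtc ξ
  have F2 : ∀ (n : ℕ) (y : X), y ∈ pd → ‖y‖ ≤ Cd * ν⁻¹ ^ n * ‖(T ^ n) y‖ := by
    intro n y hy
    set ξ : ↥pd := ⟨y, hy⟩ with hξ
    have key : ξ = ((((vd⁻¹ : _ˣ) : ↥pd →L[ℂ] ↥pd)) ^ n) (((((vd : _ˣ) : ↥pd →L[ℂ] ↥pd)) ^ n) ξ) := by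
      have := DFunLike.congr_fun (Bd_cancel n) ξ
      simpa [ContinuousLinearMap.mul_apply] using this.symm
    have hcoe : ((((((vd : _ˣ) : ↥pd →L[ℂ] ↥pd)) ^ n) ξ : ↥pd) : X) = (T ^ n) y :=
      restr_pow_coe T _ hvd_coe n ξ
    calc ‖y‖ = ‖ξ‖ := rfl
      _ = ‖((((vd⁻¹ : _ˣ) : ↥pd →L[ℂ] ↥pd)) ^ n) (((((vd : _ˣ) : ↥pd →L[ℂ] ↥pd)) ^ n) ξ)‖ := by
          rw [← key]
      _ ≤ ‖(((vd⁻¹ : _ˣ) : ↥pd →L[ℂ] ↥pd)) ^ n‖ * ‖((((vd : _ˣ) : ↥pd →L[ℂ] ↥pd)) ^ n) ξ‖ :=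
          le_opNorm _ _
      _ ≤ (Cd * ν⁻¹ ^ n) * ‖((((vd : _ˣ) : ↥pd →L[ℂ] ↥pd)) ^ n) ξ‖ :=
          mul_le_mul_of_nonneg_right (hCdb n) (norm_nonneg _)
      _ = Cd * ν⁻¹ ^ n * ‖(T ^ n) y‖ := by
          rw [show ‖((((vd : _ˣ) : ↥pd →L[ℂ] ↥pd)) ^ n) ξ‖ = ‖(T ^ n) y‖ from by
            rw [← hcoe]; rfl]
  have F3 : ∀ (n : ℕ) (y : X), y ∈ pt → ‖y‖ ≤ Ct * μ⁻¹ ^ n * ‖(T ^ n) y‖ := by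
    intro n y hy
    set ξ : ↥pt := ⟨y, hy⟩ with hξ
    have key : ξ = ((((vt⁻¹ : _ˣ) : ↥pt →L[ℂ] ↥pt)) ^ n) (((((vt : _ˣ) : ↥pt →L[ℂ] ↥pt)) ^ n) ξ) := by
      have := DFunLike.congr_fun (Bt_cancel n) ξ
      simpa [ContinuousLinearMap.mul_apply] using this.symm
    have hcoe : ((((((vt : _ˣ) : ↥pt →L[ℂ] ↥pt)) ^ n) ξ : ↥pt) : X) = (T ^ n) y :=
      restr_pow_coe T _ hvt_coe n ξ
    calc ‖y‖ = ‖ξ‖ := rfl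
      _ = ‖((((vt⁻¹ : _ˣ) : ↥pt →L[ℂ] ↥pt)) ^ n) (((((vt : _ˣ) : ↥pt →L[ℂ] ↥pt)) ^ n) ξ)‖ := by
          rw [← key]
      _ ≤ ‖(((vt⁻¹ : _ˣ) : ↥pt →L[ℂ] ↥pt)) ^ n‖ * ‖((((vt : _ˣ) : ↥pt →L[ℂ] ↥pt)) ^ n) ξ‖ :=
          le_opNorm _ _
      _ ≤ (Ct * μ⁻¹ ^ n) * ‖((((vt : _ˣ) : ↥pt →L[ℂ] ↥pt)) ^ n) ξ‖ :=
          mul_le_mul_of_nonneg_right (hCtb n) (norm_nonneg _)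
      _ = Ct * μ⁻¹ ^ n * ‖(T ^ n) y‖ := by
          rw [show ‖((((vt : _ˣ) : ↥pt →L[ℂ] ↥pt)) ^ n) ξ‖ = ‖(T ^ n) y‖ from by
            rw [← hcoe]; rfl]
  have hμ0 : 0 < μ := by linarith
  have hν0 : 0 < ν := by linarith
  have hθμ : θ / μ < 1 := by
    rw [div_lt_one hμ0]; linarith
  have hθμ0 : 0 ≤ θ / μ := by positivity
  -- A1 : Pdt kills range (1 - Pd)
  have A1 : ∀ x : X, Pdt (x - Pd x) = 0 := by
    intro x
    refine eq_zero_of_norm_le_geom hθμ0 hθμ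
      (c := Ct * (‖Pdt‖ * (Cf * ‖x - Pd x‖))) (fun n => ?_)
    have hmem : Pdt (x - Pd x) ∈ pt := ⟨x - Pd x, rfl⟩
    have h1 := F3 n _ hmem
    have h2 : (T ^ n) (Pdt (x - Pd x)) = Pdt ((T ^ n) (x - Pd x)) := (hTPtn n _).symm
    have h3 : ‖Pdt ((T ^ n) (x - Pd x))‖ ≤ ‖Pdt‖ * (Cf * θ ^ n * ‖x - Pd x‖) :=
      le_trans (Pdt.le_opNorm _) (mul_le_mul_of_nonneg_left (F1 n x) (norm_nonneg _))
    rw [h2] at h1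
    calc ‖Pdt (x - Pd x)‖ ≤ Ct * μ⁻¹ ^ n * ‖Pdt ((T ^ n) (x - Pd x))‖ := h1
      _ ≤ Ct * μ⁻¹ ^ n * (‖Pdt‖ * (Cf * θ ^ n * ‖x - Pd x‖)) := by
          apply mul_le_mul_of_nonneg_left h3
          positivity
      _ = Ct * (‖Pdt‖ * (Cf * ‖x - Pd x‖)) * (θ / μ) ^ n := by
          rw [div_pow, div_eq_mul_inv, ← inv_pow]
          ring
  -- A2 : range Pdt is contained in range Pd
  have A2 : ∀ x : X, Pdt x - Pd (Pdt x) = 0 := by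
    intro x
    have hmem : Pdt x ∈ pt := ⟨x, rfl⟩
    refine eq_zero_of_norm_le_geom hθμ0 hθμ
      (c := Cf * (1 + ‖Pd‖) * (Ct * ‖Pdt x‖)) (fun n => ?_)
    set ξ : ↥pt := ⟨Pdt x, hmem⟩ with hξ
    set w : ↥pt := ((((vt⁻¹ : _ˣ) : ↥pt →L[ℂ] ↥pt)) ^ n) ξ with hw
    have hTnw : (T ^ n) ((w : ↥pt) : X) = Pdt x := by
      have h1 : ((((((vt : _ˣ) : ↥pt →L[ℂ] ↥pt)) ^ n) w : ↥pt) : X) = (T ^ n) ((w : ↥pt) : X) :=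
        restr_pow_coe T _ hvt_coe n w
    -- (vt^n) (vt⁻¹^n ξ) = ξ
      have h2 : ((((vt : _ˣ) : ↥pt →L[ℂ] ↥pt)) ^ n) w = ξ := by
        rw [hw]
        have h3 : (((vt : _ˣ) : ↥pt →L[ℂ] ↥pt) ^ n) * (((vt⁻¹ : _ˣ) : ↥pt →L[ℂ] ↥pt) ^ n) = 1 := by
          rw [← Units.val_pow_eq_pow_val, ← Units.val_pow_eq_pow_val, ← Units.val_mul,
            inv_pow, mul_inv_cancel, Units.val_one]
        have := DFunLike.congr_fun h3 ξ
        simpa [ContinuousLinearMap.mul_apply] using this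
      rw [h2] at h1
      exact h1.symm
    have hwnorm : ‖((w : ↥pt) : X)‖ ≤ Ct * μ⁻¹ ^ n * ‖Pdt x‖ := by
      rw [← Submodule.coe_norm]
      calc ‖w‖ ≤ ‖(((vt⁻¹ : _ˣ) : ↥pt →L[ℂ] ↥pt)) ^ n‖ * ‖ξ‖ := le_opNorm _ _
        _ ≤ (Ct * μ⁻¹ ^ n) * ‖ξ‖ := mul_le_mul_of_nonneg_right (hCtb n) (norm_nonneg _)
        _ = Ct * μ⁻¹ ^ n * ‖Pdt x‖ := by rw [Submodule.coe_norm]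
    have hkey : Pdt x - Pd (Pdt x) = (T ^ n) (((w : ↥pt) : X) - Pd ((w : ↥pt) : X)) := by
      rw [map_sub, hTnw, ← hTPdn, hTnw]
    calc ‖Pdt x - Pd (Pdt x)‖ = ‖(T ^ n) (((w : ↥pt) : X) - Pd ((w : ↥pt) : X))‖ := by
          rw [← hkey]
      _ ≤ Cf * θ ^ n * ‖((w : ↥pt) : X) - Pd ((w : ↥pt) : X)‖ := F1 n _
      _ ≤ Cf * θ ^ n * ((1 + ‖Pd‖) * ‖((w : ↥pt) : X)‖) := by
          apply mul_le_mul_of_nonneg_left _ (by positivity)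
          have := Pd.le_opNorm ((w : ↥pt) : X)
          have h4 := norm_sub_le ((w : ↥pt) : X) (Pd ((w : ↥pt) : X))
          nlinarith [norm_nonneg ((w : ↥pt) : X)]
      _ ≤ Cf * θ ^ n * ((1 + ‖Pd‖) * (Ct * μ⁻¹ ^ n * ‖Pdt x‖)) := by
          apply mul_le_mul_of_nonneg_left _ (by positivity)
          apply mul_le_mul_of_nonneg_left hwnorm (by positivity)
      _ = Cf * (1 + ‖Pd‖) * (Ct * ‖Pdt x‖) * (θ / μ) ^ n := by
          rw [div_pow, div_eq_mul_inv, ← inv_pow]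
          ring
  -- projection algebra
  have hPdPt : ∀ x, Pd (Pdt x) = Pdt x := fun x => (sub_eq_zero.mp (A2 x)).symm
  have hPtPd : ∀ x, Pdt (Pd x) = Pdt x := by
    intro x
    have h := A1 x
    rw [map_sub, sub_eq_zero] at h
    exact h.symm
  -- growth of u
  obtain ⟨L, hLt, hL1, hL2⟩ := hlim
  set G : ℝ := ρ + (dt₁ + dt) / 2 with hGdef
  have hG0 : 0 < G := by simp only [hGdef]; linarith
  have hLG : L < G := by
    refine lt_of_le_of_lt hL2 ?_
    simp only [hGdef]; linarith
  have hGdt : G < ρ + dt := by simp only [hGdef]; linarith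
  obtain ⟨CU, hCU, hCUb⟩ : ∃ CU : ℝ, 0 < CU ∧ ∀ n, ‖u n‖ ≤ CU * G ^ n := by
    refine ev_to_global _ _ (fun n => norm_nonneg _) (fun n => by positivity) ?_
    have h1 : ∀ᶠ n : ℕ in atTop, ‖u n‖ ^ ((n : ℝ))⁻¹ < G := hLt.eventually_lt_const hLG
    filter_upwards [h1, eventually_ge_atTop 1] with n hn hn1
    have hn0 : (n : ℝ) ≠ 0 := by
      have : (0:ℝ) < n := by exact_mod_cast hn1
      linarith
    have h2 : (‖u n‖ ^ ((n : ℝ))⁻¹) ^ (n : ℕ) ≤ G ^ (n : ℕ) :=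
      pow_le_pow_left₀ (Real.rpow_nonneg (norm_nonneg _) _) hn.le n
    calc ‖u n‖ = (‖u n‖ ^ ((n : ℝ))⁻¹) ^ (n : ℕ) := by
          rw [← Real.rpow_natCast (‖u n‖ ^ ((n : ℝ))⁻¹) n, ← Real.rpow_mul (norm_nonneg _),
            inv_mul_cancel₀ hn0, Real.rpow_one]
      _ ≤ G ^ (n : ℕ) := h2
  -- perturbation terms
  set E : ℕ → X := fun n => Sig n (u n) with hEdef
  obtain ⟨CS, hCSb⟩ := hSig
  have hCS0 : 0 ≤ CS := by
    have := hCSb 0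
    have h0 := norm_nonneg (Sig 0)
    simpa using le_trans h0 this
  set η : ℝ := r * G with hηdef
  have hη0 : 0 < η := by positivity
  have hηβ : η < β := by
    calc η = r * G := rfl
      _ < r * (ρ + dt) := by exact mul_lt_mul_of_pos_left hGdt hr
      _ = (ρ + dt) * r := by ring
      _ < β := hrsmall
  have hr1 : r < 1 := by
    by_contra hcon
    push_neg at hcon
    have : ρ + dt ≤ (ρ + dt) * r := le_mul_of_one_le_right (by linarith) hcon
    linarith
  have hηG : η ≤ G := by
    calc η = r * G := rfl
      _ ≤ 1 * G := mul_le_mul_of_nonneg_right hr1.le hG0.le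
      _ = G := one_mul G
  set CE : ℝ := CS * CU + 1 with hCEdef
  have hCE : 0 < CE := by positivity
  have hEb : ∀ n, ‖E n‖ ≤ CE * η ^ n := by
    intro n
    calc ‖E n‖ ≤ ‖Sig n‖ * ‖u n‖ := (Sig n).le_opNorm _
      _ ≤ (CS * r ^ n) * (CU * G ^ n) :=
          mul_le_mul (hCSb n) (hCUb n) (norm_nonneg _) (by positivity)
      _ = (CS * CU) * η ^ n := by rw [hηdef, mul_pow]; ring
      _ ≤ CE * η ^ n := by
          apply mul_le_mul_of_nonneg_right _ (by positivity)
          simp only [hCEdef]; linarith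
  have hu' : ∀ n, u (n + 1) = T (u n) + E n := by
    intro n
    rw [hu n]
    simp [hEdef]
  -- the Pdt-component of u
  have memPt : ∀ y : X, Pdt y ∈ pt := fun y => ⟨y, rfl⟩
  have hPtE : ∀ k, ‖Pdt (E k)‖ ≤ (‖Pdt‖ * CE) * η ^ k := by
    intro k
    calc ‖Pdt (E k)‖ ≤ ‖Pdt‖ * ‖E k‖ := Pdt.le_opNorm _
      _ ≤ ‖Pdt‖ * (CE * η ^ k) := mul_le_mul_of_nonneg_left (hEb k) (norm_nonneg _)
      _ = (‖Pdt‖ * CE) * η ^ k := by ring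
  have hημ : η < μ := by linarith
  obtain ⟨st, hst_norm, hst_rec, -⟩ := tail_series T pt vt hvt_coe μ Ct hμ0 hCt hCtb
    (fun k => Pdt (E k)) (fun k => memPt _) (‖Pdt‖ * CE) η hη0 hημ hPtE
    0 (fun k => rfl) (fun ξ h => rfl)
  set Dt : ℝ := Ct * μ⁻¹ * (‖Pdt‖ * CE) * (1 - η / μ)⁻¹ with hDtdef
  have hDt0 : 0 ≤ Dt := by
    have h1 : (0:ℝ) < 1 - η / μ := by
      have : η / μ < 1 := (div_lt_one hμ0).mpr hημ
      linarith
    positivity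
  set zt : ℕ → X := fun n => Pdt (u n) + ((st n : ↥pt) : X) with hztdef
  have hzt_rec : ∀ n, zt (n + 1) = T (zt n) := by
    intro n
    simp only [hztdef]
    rw [hu' n, map_add, map_add, hst_rec n, hTPt]
    abel
  have hzt_iter : ∀ n m, (T ^ m) (zt n) = zt (n + m) := by
    intro n m
    induction m with
    | zero => simp
    | succ m ih =>
      rw [pow_succ', ContinuousLinearMap.mul_apply, ih, ← hzt_rec (n + m)]
      rfl
  have hzt_mem : ∀ n, zt n ∈ pt := fun n =>
    Submodule.add_mem _ (memPt (u n)) (SetLike.coe_mem (st n))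
  set Cz : ℝ := ‖Pdt‖ * CU + Dt with hCzdef
  have hzt_growth : ∀ n, ‖zt n‖ ≤ Cz * G ^ n := by
    intro n
    have h1 : ‖Pdt (u n)‖ ≤ ‖Pdt‖ * CU * G ^ n := by
      calc ‖Pdt (u n)‖ ≤ ‖Pdt‖ * ‖u n‖ := Pdt.le_opNorm _
        _ ≤ ‖Pdt‖ * (CU * G ^ n) := mul_le_mul_of_nonneg_left (hCUb n) (norm_nonneg _)
        _ = ‖Pdt‖ * CU * G ^ n := by ring
    have h2 : ‖((st n : ↥pt) : X)‖ ≤ Dt * G ^ n := by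
      refine (hst_norm n).trans ?_
      exact mul_le_mul_of_nonneg_left (pow_le_pow_left₀ hη0.le hηG n) hDt0
    calc ‖zt n‖ ≤ ‖Pdt (u n)‖ + ‖((st n : ↥pt) : X)‖ := norm_add_le _ _
      _ ≤ ‖Pdt‖ * CU * G ^ n + Dt * G ^ n := add_le_add h1 h2
      _ = Cz * G ^ n := by rw [hCzdef]; ring
  have hGμ : G / μ < 1 := (div_lt_one hμ0).mpr (by linarith)
  have hzt0 : ∀ n, zt n = 0 := by
    intro n
    refine eq_zero_of_norm_le_geom (by positivity) hGμ
      (c := Ct * (Cz * G ^ n)) (fun m => ?_)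
    calc ‖zt n‖ ≤ Ct * μ⁻¹ ^ m * ‖(T ^ m) (zt n)‖ := F3 m _ (hzt_mem n)
      _ = Ct * μ⁻¹ ^ m * ‖zt (n + m)‖ := by rw [hzt_iter]
      _ ≤ Ct * μ⁻¹ ^ m * (Cz * G ^ (n + m)) := by
          apply mul_le_mul_of_nonneg_left (hzt_growth (n + m)) (by positivity)
      _ = Ct * (Cz * G ^ n) * (G / μ) ^ m := by
          rw [pow_add, div_pow, div_eq_mul_inv, ← inv_pow]
          ring
  have hPtu_norm : ∀ n, ‖Pdt (u n)‖ ≤ Dt * η ^ n := by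
    intro n
    have h1 : Pdt (u n) = -((st n : ↥pt) : X) := eq_neg_of_add_eq_zero_left (hzt0 n)
    rw [h1, norm_neg]
    exact hst_norm n
  -- the middle projection Q
  set Qp : X →L[ℂ] X := Pd - Pdt with hQpdef
  have hQap : ∀ x, Qp x = Pd x - Pdt x := fun x => rfl
  have hPdQ : ∀ x, Pd (Qp x) = Qp x := by
    intro x
    rw [hQap, map_sub, hPdp, hPdPt]
  have hPtQ : ∀ x, Pdt (Qp x) = 0 := by
    intro x
    rw [hQap, map_sub, hPtPd, hPtp, sub_self]
  have hQQ : ∀ x, Qp (Qp x) = Qp x := by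
    intro x
    rw [hQap (Qp x), hPdQ, hPtQ, sub_zero]
  have hTQ : ∀ x, Qp (T x) = T (Qp x) := by
    intro x
    rw [hQap, hQap, hTPd, hTPt, map_sub]
  have memQ : ∀ x : X, Qp x ∈ pd := fun x => ⟨Qp x, hPdQ x⟩
  -- tail series on pd
  have hQE : ∀ k, ‖Qp (E k)‖ ≤ (‖Qp‖ * CE) * η ^ k := by
    intro k
    calc ‖Qp (E k)‖ ≤ ‖Qp‖ * ‖E k‖ := Qp.le_opNorm _
      _ ≤ ‖Qp‖ * (CE * η ^ k) := mul_le_mul_of_nonneg_left (hEb k) (norm_nonneg _)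
      _ = (‖Qp‖ * CE) * η ^ k := by ring
  have hην : η < ν := by linarith
  have hWinv : ∀ ξ : ↥pd, Pdt ((ξ : X)) = 0 →
      Pdt (((((vd⁻¹ : _ˣ) : ↥pd →L[ℂ] ↥pd)) ξ : ↥pd) : X) = 0 := by
    intro ξ hξ
    set w : ↥pd := (((vd⁻¹ : _ˣ) : ↥pd →L[ℂ] ↥pd)) ξ with hwdef
    have hTw : T ((w : ↥pd) : X) = (ξ : X) := by
      have h1 : (((vd : _ˣ) : ↥pd →L[ℂ] ↥pd)) w = ξ := by
        rw [hwdef, ← ContinuousLinearMap.mul_apply, ← Units.val_mul, mul_inv_cancel,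
          Units.val_one, ContinuousLinearMap.one_apply]
      rw [← hvd_coe w, h1]
    have h2 : (T ^ 1) (Pdt ((w : ↥pd) : X)) = 0 := by
      rw [pow_one, ← hTPt, hTw, hξ]
    have h3 := F3 1 (Pdt ((w : ↥pd) : X)) (memPt _)
    rw [h2, norm_zero, mul_zero] at h3
    exact norm_le_zero_iff.mp h3
  obtain ⟨sd, hsd_norm, hsd_rec, hsd_W⟩ := tail_series T pd vd hvd_coe ν Cd hν0 hCd hCdb
    (fun k => Qp (E k)) (fun k => memQ _) (‖Qp‖ * CE) η hη0 hην hQE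
    Pdt (fun k => hPtQ _) hWinv
  set Dd : ℝ := Cd * ν⁻¹ * (‖Qp‖ * CE) * (1 - η / ν)⁻¹ with hDddef
  have hDd0 : 0 ≤ Dd := by
    have h1 : (0:ℝ) < 1 - η / ν := by
      have : η / ν < 1 := (div_lt_one hν0).mpr hην
      linarith
    positivity
  -- the limit solution
  set uinf : ℕ → X := fun n => Qp (u n) + ((sd n : ↥pd) : X) with huinfdef
  have hQuinf : ∀ n, Qp (uinf n) = uinf n := by
    intro n
    simp only [huinfdef]
    rw [map_add, hQQ]
    congr 1
    have h1 : Pd ((sd n : ↥pd) : X) = ((sd n : ↥pd) : X) :=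
      (proj_mem_range_iff hPd2).mp (SetLike.coe_mem (sd n))
    rw [hQap, h1, hsd_W, sub_zero]
  have hrecX : ∀ n, uinf (n + 1) = T (uinf n) := by
    intro n
    simp only [huinfdef]
    rw [map_add, hsd_rec n, hu' n, map_add, hTQ]
    abel
  have hrec_final : ∀ n, uinf (n + 1) = (Qp.comp (T.comp Qp)) (uinf n) := by
    intro n
    rw [ContinuousLinearMap.comp_apply, ContinuousLinearMap.comp_apply, hQuinf n,
      ← hrecX n, hQuinf (n + 1)]
  have hmemf : ∀ n, uinf n ∈ Set.range ⇑Qp := fun n => ⟨uinf n, hQuinf n⟩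
  -- the stable component estimate
  set cc : ℕ → X := fun n => u n - Pd (u n) with hccdef
  have hcc_rec : ∀ n, cc (n + 1) = T (cc n) + (E n - Pd (E n)) := by
    intro n
    simp only [hccdef]
    rw [hu' n, map_add, map_sub]
    rw [hTPd]
    abel
  have hccform : ∀ n, cc n = (T ^ n) (cc 0)
      + ∑ k ∈ Finset.range n, (T ^ (n - 1 - k)) (E k - Pd (E k)) := by
    intro n
    induction n with
    | zero => simp
    | succ n ih =>
      rw [hcc_rec n, ih, map_add, map_sum, Finset.sum_range_succ]
      have h1 : T ((T ^ n) (cc 0)) = (T ^ (n + 1)) (cc 0) := by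
        rw [pow_succ', ContinuousLinearMap.mul_apply]
      have h2 : ∀ k ∈ Finset.range n,
          T ((T ^ (n - 1 - k)) (E k - Pd (E k)))
            = (T ^ (n + 1 - 1 - k)) (E k - Pd (E k)) := by
        intro k hk
        have hk' : k < n := Finset.mem_range.mp hk
        have : n + 1 - 1 - k = (n - 1 - k) + 1 := by omega
        rw [this, pow_succ', ContinuousLinearMap.mul_apply]
      rw [h1, Finset.sum_congr rfl h2]
      have h3 : (T ^ (n + 1 - 1 - n)) (E n - Pd (E n)) = E n - Pd (E n) := by
        have : n + 1 - 1 - n = 0 := by omega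
        rw [this, pow_zero, ContinuousLinearMap.one_apply]
      rw [h3]
      abel
  have hβη : 0 < β - η := by linarith
  have hconv : ∀ n, (∑ k ∈ Finset.range n, θ ^ (n - 1 - k) * η ^ k) ≤ β ^ n / (β - η) := by
    intro n
    match n with
    | 0 =>
      simp only [Finset.range_zero, Finset.sum_empty, pow_zero]
      positivity
    | Nat.succ m =>
      have hterm : ∀ k ∈ Finset.range (m + 1),
          θ ^ (m + 1 - 1 - k) * η ^ k ≤ β ^ m * (η / β) ^ k := by
        intro k hk
        have hk' : k ≤ m := by
          have := Finset.mem_range.mp hk; omega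
        have e1 : m + 1 - 1 - k = m - k := by omega
        rw [e1]
        have h1 : θ ^ (m - k) ≤ β ^ (m - k) := pow_le_pow_left₀ hθ0.le hθβ.le _
        have e2 : β ^ (m - k) * β ^ k = β ^ m := by
          rw [← pow_add]
          congr 1
          omega
        have h2 : β ^ (m - k) * η ^ k = β ^ m * (η / β) ^ k := by
          rw [div_pow, ← e2]
          field_simp
        calc θ ^ (m - k) * η ^ k ≤ β ^ (m - k) * η ^ k :=
              mul_le_mul_of_nonneg_right h1 (by positivity)
          _ = β ^ m * (η / β) ^ k := h2
      have hgeo2 : ∑ k ∈ Finset.range (m + 1), (η / β) ^ k ≤ (1 - η / β)⁻¹ := by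
        have hsummable : Summable (fun k : ℕ => (η / β) ^ k) :=
          summable_geometric_of_lt_one (by positivity) ((div_lt_one hβ).mpr hηβ)
        have := Summable.sum_le_tsum (Finset.range (m + 1)) (fun k _ => by positivity) hsummable
        rwa [tsum_geometric_of_lt_one (by positivity) ((div_lt_one hβ).mpr hηβ)] at this
      calc ∑ k ∈ Finset.range (m + 1), θ ^ (m + 1 - 1 - k) * η ^ k
          ≤ ∑ k ∈ Finset.range (m + 1), β ^ m * (η / β) ^ k :=
            Finset.sum_le_sum hterm
        _ = β ^ m * ∑ k ∈ Finset.range (m + 1), (η / β) ^ k := by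
            rw [Finset.mul_sum]
        _ ≤ β ^ m * (1 - η / β)⁻¹ :=
            mul_le_mul_of_nonneg_left hgeo2 (by positivity)
        _ = β ^ (m + 1) / (β - η) := by
            rw [pow_succ]
            have h4 : (1 - η / β)⁻¹ = β / (β - η) := by
              rw [eq_div_iff hβη.ne']
              field_simp
            rw [h4]
            field_simp
  set Ccc : ℝ := Cf * ‖u 0 - Pd (u 0)‖ + Cf * (1 + ‖Pd‖) * CE / (β - η) with hCccdef
  have hccb : ∀ n, ‖cc n‖ ≤ Ccc * β ^ n := by
    intro n
    have h1 : ‖(T ^ n) (cc 0)‖ ≤ Cf * θ ^ n * ‖u 0 - Pd (u 0)‖ := F1 n (u 0)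
    have h2 : ∀ k, ‖(T ^ (n - 1 - k)) (E k - Pd (E k))‖
        ≤ Cf * (1 + ‖Pd‖) * CE * (θ ^ (n - 1 - k) * η ^ k) := by
      intro k
      have h3 : ‖E k - Pd (E k)‖ ≤ (1 + ‖Pd‖) * ‖E k‖ := by
        have h4 := Pd.le_opNorm (E k)
        have h5 := norm_sub_le (E k) (Pd (E k))
        nlinarith [norm_nonneg (E k)]
      calc ‖(T ^ (n - 1 - k)) (E k - Pd (E k))‖
          ≤ Cf * θ ^ (n - 1 - k) * ‖E k - Pd (E k)‖ := F1 _ (E k)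
        _ ≤ Cf * θ ^ (n - 1 - k) * ((1 + ‖Pd‖) * (CE * η ^ k)) := by
            apply mul_le_mul_of_nonneg_left _ (by positivity)
            exact le_trans h3 (mul_le_mul_of_nonneg_left (hEb k) (by positivity))
        _ = Cf * (1 + ‖Pd‖) * CE * (θ ^ (n - 1 - k) * η ^ k) := by ring
    calc ‖cc n‖ ≤ ‖(T ^ n) (cc 0)‖
          + ∑ k ∈ Finset.range n, ‖(T ^ (n - 1 - k)) (E k - Pd (E k))‖ := by
          rw [hccform n]
          exact (norm_add_le _ _).trans (add_le_add le_rfl (norm_sum_le _ _))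
      _ ≤ Cf * θ ^ n * ‖u 0 - Pd (u 0)‖
          + Cf * (1 + ‖Pd‖) * CE * ∑ k ∈ Finset.range n, θ ^ (n - 1 - k) * η ^ k := by
          apply add_le_add h1
          rw [Finset.mul_sum]
          exact Finset.sum_le_sum (fun k _ => h2 k)
      _ ≤ Cf * β ^ n * ‖u 0 - Pd (u 0)‖
          + Cf * (1 + ‖Pd‖) * CE * (β ^ n / (β - η)) := by
          apply add_le_add
          · have h7 : θ ^ n ≤ β ^ n := pow_le_pow_left₀ hθ0.le hθβ.le n
            have h6 : (0:ℝ) ≤ ‖u 0 - Pd (u 0)‖ := norm_nonneg _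
            have h8 := mul_le_mul_of_nonneg_right
              (mul_le_mul_of_nonneg_left h7 hCf.le) h6
            linarith [h8]
          · exact mul_le_mul_of_nonneg_left (hconv n) (by positivity)
      _ = Ccc * β ^ n := by rw [hCccdef]; ring
  -- total error
  set Cerr : ℝ := Ccc + Dt + Dd with hCerrdef
  have herr : ∀ n, ‖u n - uinf n‖ ≤ Cerr * β ^ n := by
    intro n
    have hdecomp : u n - uinf n = cc n + Pdt (u n) - ((sd n : ↥pd) : X) := by
      simp only [huinfdef, hccdef, hQap]
      abel
    have h1 : ‖Pdt (u n)‖ ≤ Dt * β ^ n :=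
      (hPtu_norm n).trans (mul_le_mul_of_nonneg_left
        (pow_le_pow_left₀ hη0.le hηβ.le n) hDt0)
    have h2 : ‖((sd n : ↥pd) : X)‖ ≤ Dd * β ^ n :=
      (hsd_norm n).trans (mul_le_mul_of_nonneg_left
        (pow_le_pow_left₀ hη0.le hηβ.le n) hDd0)
    calc ‖u n - uinf n‖ = ‖cc n + Pdt (u n) - ((sd n : ↥pd) : X)‖ := by rw [hdecomp]
      _ ≤ ‖cc n + Pdt (u n)‖ + ‖((sd n : ↥pd) : X)‖ := norm_sub_le _ _
      _ ≤ ‖cc n‖ + ‖Pdt (u n)‖ + ‖((sd n : ↥pd) : X)‖ := by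
          have := norm_add_le (cc n) (Pdt (u n))
          linarith
      _ ≤ Ccc * β ^ n + Dt * β ^ n + Dd * β ^ n := by
          have := hccb n
          linarith
      _ = Cerr * β ^ n := by rw [hCerrdef]; ring
  -- nonvanishing
  have hinj : ∀ y : X, y ∈ pd → T y = 0 → y = 0 := by
    intro y hy hTy
    have h1 := F2 1 y hy
    simp only [pow_one] at h1
    rw [hTy, norm_zero, mul_zero] at h1
    exact norm_le_zero_iff.mp h1
  have huinf_pd : ∀ n, uinf n ∈ pd := by
    intro n
    have := memQ (uinf n)
    rwa [hQuinf n] at this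
  have hCerr0 : 0 ≤ Cerr := le_trans (norm_nonneg (u 0 - uinf 0)) (by simpa using herr 0)
  have hne : ∀ n, uinf n ≠ 0 := by
    intro n hn0
    have hfwd : ∀ m, uinf (n + m) = 0 := by
      intro m
      induction m with
      | zero => exact hn0
      | succ m ih =>
        have := hrecX (n + m)
        rw [ih, map_zero] at this
        exact this
    have hbwd : ∀ j, uinf (n - j) = 0 := by
      intro j
      induction j with
      | zero => exact hn0
      | succ j ih =>
        by_cases hc : n - j = 0
        · rw [show n - (j + 1) = n - j from by omega]
          exact ih
        · have he : (n - (j + 1)) + 1 = n - j := by omega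
          have h2 : T (uinf (n - (j + 1))) = 0 := by
            rw [← hrecX, he]
            exact ih
          exact hinj _ (huinf_pd _) h2
    have hall : ∀ m, uinf m = 0 := by
      intro m
      rcases le_or_gt m n with hmn | hmn
      · rw [show m = n - (n - m) from by omega]
        exact hbwd _
      · rw [show m = n + (m - n) from by omega]
        exact hfwd _
    set CP : ℝ := Cerr + 1 with hCPdef
    have hCP : 0 < CP := by simp only [hCPdef]; linarith
    have hudecay : ∀ m, ‖u m‖ ≤ CP * β ^ m := by
      intro m
      have h1 := herr m
      rw [hall m, sub_zero] at h1
      refine h1.trans ?_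
      apply mul_le_mul_of_nonneg_right _ (by positivity)
      simp only [hCPdef]; linarith
    have hlimle : L ≤ 1 * β := by
      have hfn : ∀ᶠ m : ℕ in atTop, ‖u m‖ ^ ((m : ℝ))⁻¹ ≤ CP ^ ((m : ℝ))⁻¹ * β := by
        filter_upwards [eventually_ge_atTop 1] with m hm
        have hm0 : (m : ℝ) ≠ 0 := by
          have : (0:ℝ) < m := by exact_mod_cast hm
          linarith
        have h2 : ‖u m‖ ^ ((m : ℝ))⁻¹ ≤ (CP * β ^ m) ^ ((m : ℝ))⁻¹ :=
          Real.rpow_le_rpow (norm_nonneg _) (hudecay m) (by positivity)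
        refine h2.trans_eq ?_
        rw [Real.mul_rpow hCP.le (by positivity)]
        congr 1
        rw [← Real.rpow_natCast β m, ← Real.rpow_mul hβ.le, mul_inv_cancel₀ hm0,
          Real.rpow_one]
      have l1 : Tendsto (fun m : ℕ => ((m : ℝ))⁻¹) atTop (nhds 0) := by
        have := tendsto_one_div_atTop_nhds_zero_nat (𝕜 := ℝ)
        simpa [one_div] using this
      have l2 : Tendsto (fun m : ℕ => CP ^ ((m : ℝ))⁻¹) atTop (nhds 1) := by
        have heq : (fun m : ℕ => CP ^ ((m : ℝ))⁻¹)
            = fun m : ℕ => Real.exp (Real.log CP * ((m : ℝ))⁻¹) := by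
          funext m
          rw [Real.rpow_def_of_pos hCP]
        rw [heq]
        have l3 : Tendsto (fun m : ℕ => Real.log CP * ((m : ℝ))⁻¹) atTop (nhds 0) := by
          have := l1.const_mul (Real.log CP)
          simpa using this
        have := (Real.continuous_exp.tendsto 0).comp l3
        simpa [Function.comp_def] using this
      have htend : Tendsto (fun m : ℕ => CP ^ ((m : ℝ))⁻¹ * β) atTop (nhds (1 * β)) :=
        l2.mul tendsto_const_nhds
      exact le_of_tendsto_of_tendsto hLt htend hfn
    rw [one_mul] at hlimle
    have : ρ - d < ρ - d₁ := by linarith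
    rw [← hβdef] at this
    linarith
  exact ⟨uinf, hne, hmemf, hrec_final, Cerr, herr⟩

end Main

/-- **Convergence to a solution of the asymptotic equation.**
Assume `∅ ≠ σ(T) ∩ {ρ−δ ≤ |z| ≤ ρ+δ̃} ⊆ {ρ−δ₁ < |z| < ρ+δ̃₁}` with `0 < δ₁ < δ`,
`0 < δ̃₁ < δ̃`, and that `T` admits a shifted exponential dichotomy with gap
`[ρ+δ̃₁, ρ+δ*]`, `δ* > δ̃`.  Let `Q_{ρ−δ} = I − P_{ρ−δ}` and `Q_{ρ+δ̃} = I − P_{ρ+δ̃}` be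
Riesz projections and `T_ρ = (Q_{ρ+δ̃} − Q_{ρ−δ}) T (Q_{ρ+δ̃} − Q_{ρ−δ})`.  If
`u(n+1) = (T + Σ(n)) u(n)` with `‖Σ(n)‖ = O(rⁿ)`, `(ρ+δ̃) r < ρ−δ`, and
`ρ−δ₁ ≤ lim ‖u(n)‖^{1/n} ≤ ρ+δ̃₁`, then there is a nowhere-vanishing sequence
`u_∞(n) ∈ R(Q_{ρ+δ̃} − Q_{ρ−δ})` with `u_∞(n+1) = T_ρ u_∞(n)` and
`‖u(n) − u_∞(n)‖ = O((ρ−δ)ⁿ)` as `n → +∞`. -/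
theorem convergence_to_asymptotic_equation
    (T : X →L[ℂ] X) (ρ d₁ d dt₁ dt ds : ℝ)
    (hρ : 0 < ρ) (hd₁ : 0 < d₁) (hd : d₁ < d) (hdt₁ : 0 < dt₁) (hdt : dt₁ < dt)
    (hds : dt < ds)
    (hspec_ne :
      (spectrum ℂ T ∩
        {z : ℂ | ρ - d ≤ ‖z‖ ∧ ‖z‖ ≤ ρ + dt}).Nonempty)
    (hspec_sub :
      spectrum ℂ T ∩ {z : ℂ | ρ - d ≤ ‖z‖ ∧ ‖z‖ ≤ ρ + dt}
        ⊆ {z : ℂ | ρ - d₁ < ‖z‖ ∧ ‖z‖ < ρ + dt₁})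
    (K : ℝ) (Pgap : X →L[ℂ] X)
    (hdich : ConstShiftedDichotomy T (ρ + dt₁) (ρ + ds) K Pgap)
    (Pd Pdt : X →L[ℂ] X)
    (hPd : IsRieszProjection T Pd (ρ - d))
    (hPdt : IsRieszProjection T Pdt (ρ + dt))
    (Sig : ℕ → X →L[ℂ] X) (r : ℝ) (hr : 0 < r)
    (hrsmall : (ρ + dt) * r < ρ - d)
    (hSig : ∃ C : ℝ, ∀ n : ℕ, ‖Sig n‖ ≤ C * r ^ n)
    (u : ℕ → X)
    (hu : ∀ n : ℕ, u (n + 1) = (T + Sig n) (u n))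
    (hlim : ∃ L : ℝ, Tendsto (fun n : ℕ => ‖u n‖ ^ ((n : ℝ))⁻¹) atTop (nhds L)
      ∧ ρ - d₁ ≤ L ∧ L ≤ ρ + dt₁) :
    ∃ uinf : ℕ → X,
      (∀ n, uinf n ≠ 0)
      ∧ (∀ n, uinf n ∈ Set.range (Pd - Pdt))
      ∧ (∀ n, uinf (n + 1) = ((Pd - Pdt).comp (T.comp (Pd - Pdt))) (uinf n))
      ∧ ∃ C' : ℝ, ∀ n : ℕ, ‖u n - uinf n‖ ≤ C' * (ρ - d) ^ n := by
  exact convergence_to_asymptotic_equation' T ρ d₁ d dt₁ dt hρ hd₁ hd hdt₁ hdt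
    Pd Pdt hPd hPdt Sig r hr hrsmall hSig u hu hlim
end
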